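/- arXiv:2012.10719 — 4 statements merged into one kernel-verified Lean document; each statement's English description precedes it below -/
import Mathlib

section
/- For p > 2, if u ∈ L^p(0,1) satisfies ∫₀¹∫₀¹ |u(x)-u(y)|^p / |x-y|^p dx dy < ∞, then u has a representative that is Hölder continuous on [0,1] with exponent (p-2)/p. -/
open MeasureTheory Set Real Filter Topology
open scoped ENNReal NNReal

/-- Lebesgue measure restricted to the unit interval `(0,1)`. -/
noncomputable def muI : Measure ℝ := volume.restrict (Set.Ioo 0 1)

/-- Product measure on the unit square `(0,1)²`. -/
noncomputable def muS : Measure (ℝ × ℝ) := muI.prod muI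

/-- Nonlocal difference quotient `Du(x,X) = (u X - u x)/(X - x)`. -/
noncomputable def Du (u : ℝ → ℝ) : ℝ × ℝ → ℝ := fun p => (u p.2 - u p.1) / (p.2 - p.1)

lemma key_est (p : ℝ) (hp : 2 < p) (u₀ : ℝ → ℝ) (hm : Measurable u₀)
    (hint : IntegrableOn u₀ (Set.Ioo 0 1) volume)
    (M : ℝ≥0∞) (hM : M ≠ ⊤)
    (hE : ∫⁻ q : ℝ × ℝ, ENNReal.ofReal (|u₀ q.1 - u₀ q.2| ^ p / |q.1 - q.2| ^ p) ∂muS ≤ M)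
    (S T : Set ℝ)
    (hS : S ⊆ Set.Ioo 0 1) (hT : T ⊆ Set.Ioo 0 1)
    (a b D : ℝ) (ha : 0 < a) (hb : 0 < b) (hD : 0 ≤ D)
    (haS : a ≤ (volume S).toReal) (hbT : b ≤ (volume T).toReal)
    (hdist : ∀ x ∈ S, ∀ y ∈ T, |x - y| ≤ D) :
    |(⨍ y in S, u₀ y) - ⨍ y in T, u₀ y| ≤
      D * (M.toReal) ^ (1/p) * (a*b) ^ (-(1/p)) := by
  have hp1 : (1:ℝ) < p := by linarith
  have hp0 : (0:ℝ) < p := by linarith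
  have hpne : p ≠ 0 := ne_of_gt hp0
  have hIoofin : volume (Set.Ioo (0:ℝ) 1) < ⊤ := by simp
  have hSfin : volume S < ⊤ := lt_of_le_of_lt (measure_mono hS) hIoofin
  have hTfin : volume T < ⊤ := lt_of_le_of_lt (measure_mono hT) hIoofin
  set A : ℝ := (volume S).toReal with hAdef
  set B : ℝ := (volume T).toReal with hBdef
  have hA : 0 < A := lt_of_lt_of_le ha haS
  have hB : 0 < B := lt_of_lt_of_le hb hbT
  haveI : IsFiniteMeasure (volume.restrict S) :=
    ⟨by rwa [Measure.restrict_apply_univ]⟩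
  haveI : IsFiniteMeasure (volume.restrict T) :=
    ⟨by rwa [Measure.restrict_apply_univ]⟩
  have intS : IntegrableOn u₀ S volume := hint.mono_set hS
  have intT : IntegrableOn u₀ T volume := hint.mono_set hT
  set cS : ℝ := ∫ y in S, u₀ y with hcS
  set cT : ℝ := ∫ y in T, u₀ y with hcT
  set I : ℝ := ∫ x in S, (∫ y in T, (u₀ x - u₀ y)) with hIdef
  -- compute the inner integral
  have hinner : ∀ x : ℝ, (∫ y in T, (u₀ x - u₀ y)) = B * u₀ x - cT := by
    intro x
    rw [integral_sub (integrableOn_const (C := u₀ x) hTfin.ne) intT, setIntegral_const]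
    simp [smul_eq_mul, measureReal_def, hBdef, hcT]
  have hI : I = B * cS - A * cT := by
    rw [hIdef]
    simp only [hinner]
    rw [integral_sub (intS.const_mul B) (integrableOn_const (C := cT) hSfin.ne),
      integral_const_mul, setIntegral_const]
    simp [smul_eq_mul, measureReal_def, hAdef, hcS]
  have havg : (⨍ y in S, u₀ y) - ⨍ y in T, u₀ y = I / (A * B) := by
    rw [setAverage_eq, setAverage_eq, hI, smul_eq_mul, smul_eq_mul]
    rw [measureReal_def, measureReal_def, ← hAdef, ← hBdef, ← hcS, ← hcT]
    field_simp
  -- the product measure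
  set ν : Measure (ℝ × ℝ) := (volume.restrict S).prod (volume.restrict T) with hνdef
  have hfmeas : Measurable (fun z : ℝ × ℝ => ((‖u₀ z.1 - u₀ z.2‖₊ : ℝ≥0) : ℝ≥0∞)) :=
    ((hm.comp measurable_fst).sub (hm.comp measurable_snd)).nnnorm.coe_nnreal_ennreal
  have step1 : (‖I‖₊ : ℝ≥0∞) ≤ ∫⁻ z, ‖u₀ z.1 - u₀ z.2‖₊ ∂ν := by
    calc (‖I‖₊ : ℝ≥0∞) ≤ ∫⁻ x in S, ‖∫ y in T, (u₀ x - u₀ y)‖₊ :=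
          enorm_integral_le_lintegral_enorm _
      _ ≤ ∫⁻ x in S, ∫⁻ y in T, ‖u₀ x - u₀ y‖₊ :=
          lintegral_mono fun x => enorm_integral_le_lintegral_enorm _
      _ = ∫⁻ z, ‖u₀ z.1 - u₀ z.2‖₊ ∂ν := (lintegral_prod _ hfmeas.aemeasurable).symm
  set q : ℝ := p.conjExponent with hqdef
  have hpq : p.HolderConjugate q := Real.HolderConjugate.conjExponent hp1
  have step2 : ∫⁻ z, (‖u₀ z.1 - u₀ z.2‖₊ : ℝ≥0∞) ∂ν ≤
      (∫⁻ z, (‖u₀ z.1 - u₀ z.2‖₊ : ℝ≥0∞) ^ p ∂ν) ^ (1/p) * (volume S * volume T) ^ (1/q) := by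
    have := ENNReal.lintegral_mul_le_Lp_mul_Lq ν hpq hfmeas.aemeasurable
      (aemeasurable_const (b := (1:ℝ≥0∞)))
    simp only [Pi.mul_apply, mul_one, ENNReal.one_rpow, lintegral_one] at this
    have hνuniv : ν Set.univ = volume S * volume T := by
      rw [hνdef, ← Set.univ_prod_univ, Measure.prod_prod, Measure.restrict_apply_univ,
        Measure.restrict_apply_univ]
    rwa [hνuniv] at this
  have step3 : ∫⁻ z, (‖u₀ z.1 - u₀ z.2‖₊ : ℝ≥0∞) ^ p ∂ν ≤ ENNReal.ofReal (D ^ p) * M := by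
    have hGmeas : Measurable (fun z : ℝ × ℝ =>
        ENNReal.ofReal (|u₀ z.1 - u₀ z.2| ^ p / |z.1 - z.2| ^ p)) := by
      fun_prop
    have hνres : ν = (volume.prod volume).restrict (S ×ˢ T) := Measure.prod_restrict S T
    rw [hνres]
    have hpt : ∀ z ∈ S ×ˢ T, (‖u₀ z.1 - u₀ z.2‖₊ : ℝ≥0∞) ^ p ≤
        ENNReal.ofReal (D ^ p) * ENNReal.ofReal (|u₀ z.1 - u₀ z.2| ^ p / |z.1 - z.2| ^ p) := by
      rintro ⟨x, y⟩ ⟨hx, hy⟩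
      simp only
      rw [show (‖u₀ x - u₀ y‖₊ : ℝ≥0∞) = ENNReal.ofReal |u₀ x - u₀ y| from Real.enorm_eq_ofReal_abs _, ENNReal.ofReal_rpow_of_nonneg (abs_nonneg _) hp0.le]
      by_cases hxy : x = y
      · subst hxy
        simp [Real.zero_rpow hpne]
      · have hxyne : (0:ℝ) < |x - y| := abs_pos.2 (sub_ne_zero.2 hxy)
        rw [← ENNReal.ofReal_mul (Real.rpow_nonneg hD p)]
        apply ENNReal.ofReal_le_ofReal
        have h1 : |x - y| ^ p ≤ D ^ p :=
          Real.rpow_le_rpow (abs_nonneg _) (hdist x hx y hy) hp0.le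
        have h2 : (0:ℝ) < |x - y| ^ p := Real.rpow_pos_of_pos hxyne p
        have : D ^ p * (|u₀ x - u₀ y| ^ p / |x - y| ^ p)
            = |u₀ x - u₀ y| ^ p * (D ^ p / |x - y| ^ p) := by ring
        rw [this]
        apply le_mul_of_one_le_right (Real.rpow_nonneg (abs_nonneg _) p)
        rw [le_div_iff₀ h2, one_mul]
        exact h1
    calc ∫⁻ z in S ×ˢ T, (‖u₀ z.1 - u₀ z.2‖₊ : ℝ≥0∞) ^ p ∂(volume.prod volume)
        ≤ ∫⁻ z in S ×ˢ T, ENNReal.ofReal (D ^ p) *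
            ENNReal.ofReal (|u₀ z.1 - u₀ z.2| ^ p / |z.1 - z.2| ^ p) ∂(volume.prod volume) :=
          setLIntegral_mono (measurable_const.mul hGmeas) hpt
      _ = ENNReal.ofReal (D ^ p) * ∫⁻ z in S ×ˢ T,
            ENNReal.ofReal (|u₀ z.1 - u₀ z.2| ^ p / |z.1 - z.2| ^ p) ∂(volume.prod volume) :=
          lintegral_const_mul _ hGmeas
      _ ≤ ENNReal.ofReal (D ^ p) * ∫⁻ z in (Set.Ioo (0:ℝ) 1) ×ˢ (Set.Ioo (0:ℝ) 1),
            ENNReal.ofReal (|u₀ z.1 - u₀ z.2| ^ p / |z.1 - z.2| ^ p) ∂(volume.prod volume) := by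
          gcongr
      _ ≤ ENNReal.ofReal (D ^ p) * M := by
          gcongr
          rw [muS, muI, Measure.prod_restrict] at hE
          exact hE
  -- combine in ℝ≥0∞
  have step4 : (‖I‖₊ : ℝ≥0∞) ≤
      (ENNReal.ofReal (D ^ p) * M) ^ (1/p) * (volume S * volume T) ^ (1/q) := by
    refine step1.trans (step2.trans ?_)
    exact mul_le_mul_left (ENNReal.rpow_le_rpow step3 (by positivity)) _
  -- to the reals
  have hq0 : (0:ℝ) < q := hpq.symm.pos
  have hRfin : (ENNReal.ofReal (D ^ p) * M) ^ (1/p) * (volume S * volume T) ^ (1/q) ≠ ⊤ := by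
    apply ENNReal.mul_ne_top
    · exact ENNReal.rpow_ne_top_of_nonneg (by positivity) (ENNReal.mul_ne_top ENNReal.ofReal_ne_top hM)
    · exact ENNReal.rpow_ne_top_of_nonneg (by positivity)
        (ENNReal.mul_ne_top hSfin.ne hTfin.ne)
  have step5 : |I| ≤ (D ^ p * M.toReal) ^ (1/p) * (A * B) ^ (1/q) := by
    have := ENNReal.toReal_mono hRfin step4
    rw [ENNReal.toReal_mul, ← ENNReal.toReal_rpow, ← ENNReal.toReal_rpow,
      ENNReal.toReal_mul, ENNReal.toReal_mul, ENNReal.toReal_ofReal (by positivity)] at this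
    simpa [Real.norm_eq_abs] using this
  have step6 : (D ^ p * M.toReal) ^ (1/p) = D * M.toReal ^ (1/p) := by
    rw [Real.mul_rpow (by positivity) ENNReal.toReal_nonneg]
    congr 1
    rw [← Real.rpow_mul hD, mul_one_div_cancel hpne, Real.rpow_one]
  have hq1 : 1/q - 1 = -(1/p) := by
    have := hpq.inv_add_inv_eq_one
    field_simp at this ⊢
    linarith
  have hABpos : (0:ℝ) < A * B := mul_pos hA hB
  have final : |I| / (A * B) ≤ D * M.toReal ^ (1/p) * (a*b) ^ (-(1/p)) := by
    rw [div_le_iff₀ hABpos]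
    calc |I| ≤ D * M.toReal ^ (1/p) * (A * B) ^ (1/q) := by rw [← step6]; exact step5
      _ = D * M.toReal ^ (1/p) * (A*B) ^ (-(1/p)) * (A * B) := by
          have h2 : (A*B) ^ ((1:ℝ)/q) = (A*B)^(-(1/p)) * (A*B) := by
            rw [show (1:ℝ)/q = -(1/p) + 1 by linarith [hq1], Real.rpow_add hABpos,
              Real.rpow_one]
          rw [h2]; ring
      _ ≤ D * M.toReal ^ (1/p) * (a*b) ^ (-(1/p)) * (A * B) := by
          have hmono : (A*B) ^ (-(1/p)) ≤ (a*b) ^ (-(1/p)) :=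
            Real.rpow_le_rpow_of_nonpos (mul_pos ha hb)
              (mul_le_mul haS hbT hb.le ENNReal.toReal_nonneg)
              (neg_nonpos.2 (by positivity))
          exact mul_le_mul_of_nonneg_right
            (mul_le_mul_of_nonneg_left hmono (by positivity)) hABpos.le
  rw [havg, abs_div, abs_of_pos hABpos]
  exact final

/-- The truncated interval around `x` of radius `r`. -/
noncomputable def Jset (x r : ℝ) : Set ℝ := Set.Ioo (max 0 (x - r)) (min 1 (x + r))

lemma Jset_subset (x r : ℝ) : Jset x r ⊆ Set.Ioo 0 1 := by
  intro y hy
  exact ⟨lt_of_le_of_lt (le_max_left 0 (x - r)) hy.1,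
    lt_of_lt_of_le hy.2 (min_le_left 1 (x + r))⟩

lemma Jset_dist {x r y : ℝ} (hy : y ∈ Jset x r) : |y - x| ≤ r := by
  have h1 : y < x + r := lt_of_lt_of_le hy.2 (min_le_right 1 (x + r))
  have h2 : x - r < y := lt_of_le_of_lt (le_max_right 0 (x - r)) hy.1
  rw [abs_le]
  constructor <;> linarith

lemma Jset_vol {x r : ℝ} (hx : x ∈ Set.Icc (0:ℝ) 1) (hr : 0 < r) (hr1 : r ≤ 1) :
    r ≤ (volume (Jset x r)).toReal := by
  obtain ⟨hx0, hx1⟩ := hx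
  have h1 : max 0 (x - r) + r ≤ min 1 (x + r) := by
    apply le_min
    · have : max 0 (x - r) ≤ 1 - r := max_le (by linarith) (by linarith)
      linarith
    · have : max 0 (x - r) ≤ x := max_le hx0 (by linarith)
      linarith
  rw [Jset, Real.volume_Ioo, ENNReal.toReal_ofReal (by linarith)]
  linarith

/-- Key estimate specialized to a pair of truncated intervals. -/
lemma key_J (p : ℝ) (hp : 2 < p) (u₀ : ℝ → ℝ) (hm : Measurable u₀)
    (hint : IntegrableOn u₀ (Set.Ioo 0 1) volume)
    (M : ℝ≥0∞) (hM : M ≠ ⊤)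
    (hE : ∫⁻ q : ℝ × ℝ, ENNReal.ofReal (|u₀ q.1 - u₀ q.2| ^ p / |q.1 - q.2| ^ p) ∂muS ≤ M)
    (x y : ℝ) (hx : x ∈ Set.Icc (0:ℝ) 1) (hy : y ∈ Set.Icc (0:ℝ) 1)
    (r s : ℝ) (hr : 0 < r) (hr1 : r ≤ 1) (hs : 0 < s) (hs1 : s ≤ 1) :
    |(⨍ z in Jset x r, u₀ z) - ⨍ z in Jset y s, u₀ z| ≤
      (|x - y| + r + s) * M.toReal ^ (1/p) * (r * s) ^ (-(1/p)) := by
  apply key_est p hp u₀ hm hint M hM hE _ _ (Jset_subset x r) (Jset_subset y s) r s _ hr hs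
    (by positivity) (Jset_vol hx hr hr1) (Jset_vol hy hs hs1)
  intro z hz w hw
  have h1 : |z - x| ≤ r := Jset_dist hz
  have h2 : |w - y| ≤ s := Jset_dist hw
  have : z - w = (z - x) + (x - y) + (y - w) := by ring
  rw [this]
  calc |(z - x) + (x - y) + (y - w)| ≤ |(z - x) + (x - y)| + |y - w| := abs_add_le _ _
    _ ≤ |z - x| + |x - y| + |y - w| := by gcongr; exact abs_add_le _ _
    _ ≤ r + |x - y| + s := by rw [abs_sub_comm y w]; gcongr
    _ = |x - y| + r + s := by ring

lemma rn_pow_alpha (p : ℝ) (hp : 2 < p) (n : ℕ) :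
    ((2:ℝ)⁻¹ ^ n : ℝ) ^ ((p - 2)/p) = ((2:ℝ)⁻¹ ^ ((p - 2)/p) : ℝ) ^ n := by
  rw [← Real.rpow_natCast ((2:ℝ)⁻¹) n, ← Real.rpow_mul (by norm_num), mul_comm,
    Real.rpow_mul (by norm_num), Real.rpow_natCast]


lemma sq_rpow {s p : ℝ} (hs : 0 < s) : (s * s) ^ (-(1/p)) = s ^ (-(2/p)) := by
  have h : s * s = s ^ ((2:ℕ):ℝ) := by rw [Real.rpow_natCast]; ring
  rw [h, ← Real.rpow_mul hs.le]
  congr 1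
  push_cast
  ring

lemma rpow_split {s p : ℝ} (hs : 0 < s) (hp : p ≠ 0) :
    s ^ ((p - 2)/p) = s * s ^ (-(2/p)) := by
  have hexp : (p - 2)/p = 1 + -(2/p) := by field_simp; ring
  rw [hexp, Real.rpow_add hs, Real.rpow_one]

/-- The dyadic chaining bound at a single point. -/
lemma chain_bound (p : ℝ) (hp : 2 < p) (u₀ : ℝ → ℝ) (hm : Measurable u₀)
    (hint : IntegrableOn u₀ (Set.Ioo 0 1) volume)
    (M : ℝ≥0∞) (hM : M ≠ ⊤)
    (hE : ∫⁻ q : ℝ × ℝ, ENNReal.ofReal (|u₀ q.1 - u₀ q.2| ^ p / |q.1 - q.2| ^ p) ∂muS ≤ M)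
    (x : ℝ) (hx : x ∈ Set.Icc (0:ℝ) 1) (n : ℕ) :
    |(⨍ z in Jset x ((2:ℝ)⁻¹ ^ n), u₀ z) - ⨍ z in Jset x ((2:ℝ)⁻¹ ^ (n+1)), u₀ z| ≤
      (4 * M.toReal ^ (1/p)) * ((2:ℝ)⁻¹ ^ ((p - 2)/p) : ℝ) ^ n := by
  have hp0 : (0:ℝ) < p := by linarith
  have hα : (0:ℝ) < (p - 2)/p := div_pos (by linarith) hp0
  set r : ℝ := (2:ℝ)⁻¹ ^ n with hrdef
  set s : ℝ := (2:ℝ)⁻¹ ^ (n+1) with hsdef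
  have hr : 0 < r := by positivity
  have hs : 0 < s := by positivity
  have hr1 : r ≤ 1 := pow_le_one₀ (by norm_num) (by norm_num)
  have hs1 : s ≤ 1 := pow_le_one₀ (by norm_num) (by norm_num)
  have hsr : s ≤ r := pow_le_pow_of_le_one (by norm_num) (by norm_num) (by omega)
  have hrs : r = 2 * s := by rw [hrdef, hsdef, pow_succ]; ring
  have hEp : (0:ℝ) ≤ M.toReal ^ (1/p) := Real.rpow_nonneg ENNReal.toReal_nonneg _
  have h0 := key_J p hp u₀ hm hint M hM hE x x hx hx r s hr hr1 hs hs1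
  rw [sub_self, abs_zero, zero_add] at h0
  have h1 : (r * s) ^ (-(1/p)) ≤ (s * s) ^ (-(1/p)) :=
    Real.rpow_le_rpow_of_nonpos (by positivity) (by nlinarith) (neg_nonpos.2 (by positivity))
  have h3 : r + s ≤ 4 * s := by rw [hrs]; linarith
  calc |(⨍ z in Jset x r, u₀ z) - ⨍ z in Jset x s, u₀ z|
      ≤ (r + s) * M.toReal ^ (1/p) * ((r * s) ^ (-(1/p))) := h0
    _ ≤ (4 * s) * M.toReal ^ (1/p) * ((s * s) ^ (-(1/p))) :=
        mul_le_mul (mul_le_mul_of_nonneg_right h3 hEp) h1 (by positivity) (by positivity)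
    _ = (4 * M.toReal ^ (1/p)) * (s ^ ((p - 2)/p)) := by
        rw [sq_rpow hs, rpow_split hs (by positivity)]
        ring
    _ ≤ (4 * M.toReal ^ (1/p)) * (r ^ ((p - 2)/p)) :=
        mul_le_mul_of_nonneg_left (Real.rpow_le_rpow hs.le hsr hα.le) (by positivity)
    _ = (4 * M.toReal ^ (1/p)) * ((2:ℝ)⁻¹ ^ ((p - 2)/p) : ℝ) ^ n := by
        rw [hrdef, rn_pow_alpha p hp n]

/-- Comparison of averages at the same scale at two nearby points. -/
lemma mid_bound (p : ℝ) (hp : 2 < p) (u₀ : ℝ → ℝ) (hm : Measurable u₀)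
    (hint : IntegrableOn u₀ (Set.Ioo 0 1) volume)
    (M : ℝ≥0∞) (hM : M ≠ ⊤)
    (hE : ∫⁻ q : ℝ × ℝ, ENNReal.ofReal (|u₀ q.1 - u₀ q.2| ^ p / |q.1 - q.2| ^ p) ∂muS ≤ M)
    (x y : ℝ) (hx : x ∈ Set.Icc (0:ℝ) 1) (hy : y ∈ Set.Icc (0:ℝ) 1) (n : ℕ)
    (hd : |x - y| ≤ (2:ℝ)⁻¹ ^ n) :
    |(⨍ z in Jset x ((2:ℝ)⁻¹ ^ n), u₀ z) - ⨍ z in Jset y ((2:ℝ)⁻¹ ^ n), u₀ z| ≤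
      (3 * M.toReal ^ (1/p)) * ((2:ℝ)⁻¹ ^ ((p - 2)/p) : ℝ) ^ n := by
  have hp0 : (0:ℝ) < p := by linarith
  have hα : (0:ℝ) < (p - 2)/p := div_pos (by linarith) hp0
  set r : ℝ := (2:ℝ)⁻¹ ^ n with hrdef
  have hr : 0 < r := by positivity
  have hr1 : r ≤ 1 := pow_le_one₀ (by norm_num) (by norm_num)
  have hEp : (0:ℝ) ≤ M.toReal ^ (1/p) := Real.rpow_nonneg ENNReal.toReal_nonneg _
  have h0 := key_J p hp u₀ hm hint M hM hE x y hx hy r r hr hr1 hr hr1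
  have h3 : |x - y| + r + r ≤ 3 * r := by linarith
  calc |(⨍ z in Jset x r, u₀ z) - ⨍ z in Jset y r, u₀ z|
      ≤ (|x - y| + r + r) * M.toReal ^ (1/p) * ((r * r) ^ (-(1/p))) := h0
    _ ≤ (3 * r) * M.toReal ^ (1/p) * ((r * r) ^ (-(1/p))) :=
        mul_le_mul_of_nonneg_right (mul_le_mul_of_nonneg_right h3 hEp) (by positivity)
    _ = (3 * M.toReal ^ (1/p)) * (r ^ ((p - 2)/p)) := by
        rw [sq_rpow hr, rpow_split hr (by positivity)]
        ring
    _ = (3 * M.toReal ^ (1/p)) * ((2:ℝ)⁻¹ ^ ((p - 2)/p) : ℝ) ^ n := by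
        rw [hrdef, rn_pow_alpha p hp n]

/-- Lebesgue differentiation: the dyadic averages converge a.e. to the function. -/
lemma ae_tendsto_Av (u₀ : ℝ → ℝ) (hm : Measurable u₀)
    (hint : IntegrableOn u₀ (Set.Ioo 0 1) volume) :
    ∀ᵐ x ∂muI, Tendsto (fun n : ℕ => ⨍ z in Jset x ((2:ℝ)⁻¹ ^ n), u₀ z) atTop (𝓝 (u₀ x)) := by
  set g : ℝ → ℝ := (Set.Ioo (0:ℝ) 1).indicator u₀ with hgdef
  have hloc : LocallyIntegrable g volume :=
    (hint.integrable_indicator measurableSet_Ioo).locallyIntegrable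
  have hae := IsUnifLocDoublingMeasure.ae_tendsto_average (μ := (volume : Measure ℝ)) hloc 1
  rw [show muI = volume.restrict (Set.Ioo 0 1) from rfl]
  filter_upwards [ae_restrict_of_ae hae, ae_restrict_mem measurableSet_Ioo] with x hx hxI
  have hxIcc : x ∈ Set.Icc (0:ℝ) 1 := Set.mem_Icc_of_Ioo hxI
  have hrpos : ∀ n : ℕ, (0:ℝ) < (2:ℝ)⁻¹ ^ n := fun n => by positivity
  have hr1 : ∀ n : ℕ, ((2:ℝ)⁻¹ : ℝ) ^ n ≤ 1 := fun n => pow_le_one₀ (by norm_num) (by norm_num)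
  have hlen : ∀ n : ℕ,
      (2:ℝ)⁻¹ ^ n ≤ min 1 (x + (2:ℝ)⁻¹ ^ n) - max 0 (x - (2:ℝ)⁻¹ ^ n) := by
    intro n
    have h := Jset_vol hxIcc (hrpos n) (hr1 n)
    rw [Jset, Real.volume_Ioo] at h
    rcases le_or_gt (min 1 (x + (2:ℝ)⁻¹ ^ n) - max 0 (x - (2:ℝ)⁻¹ ^ n)) 0 with h0 | h0
    · rw [ENNReal.ofReal_eq_zero.2 h0] at h
      simp at h
      exact absurd h (not_le.2 (by positivity))
    · rwa [ENNReal.toReal_ofReal h0.le] at h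
  set aN : ℕ → ℝ := fun n => max 0 (x - (2:ℝ)⁻¹ ^ n) with haN
  set bN : ℕ → ℝ := fun n => min 1 (x + (2:ℝ)⁻¹ ^ n) with hbN
  set w : ℕ → ℝ := fun n => (aN n + bN n) / 2 with hw
  set δ : ℕ → ℝ := fun n => (bN n - aN n) / 2 with hδ
  have hδpos : ∀ n, 0 < δ n := by
    intro n
    have h := hlen n
    have h2 := hrpos n
    simp only [hδ, hbN, haN]
    linarith
  have hδle : ∀ n, δ n ≤ (2:ℝ)⁻¹ ^ n := by
    intro n
    have h1 : x - (2:ℝ)⁻¹ ^ n ≤ aN n := le_max_right _ _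
    have h2 : bN n ≤ x + (2:ℝ)⁻¹ ^ n := min_le_right _ _
    simp only [hδ]
    linarith
  have hδtend : Tendsto δ atTop (𝓝[>] 0) := by
    apply tendsto_nhdsWithin_of_tendsto_nhds_of_eventually_within
    · apply squeeze_zero (fun n => (hδpos n).le) hδle
      exact tendsto_pow_atTop_nhds_zero_of_lt_one (by norm_num) (by norm_num)
    · exact Eventually.of_forall fun n => hδpos n
  have hxball : ∀ᶠ n : ℕ in atTop, x ∈ Metric.closedBall (w n) (1 * δ n) := by
    apply Eventually.of_forall
    intro n
    rw [one_mul, Real.closedBall_eq_Icc]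
    constructor
    · have : w n - δ n = aN n := by simp only [hw, hδ]; ring
      rw [this]
      exact max_le hxIcc.1 (by linarith [hrpos n])
    · have : w n + δ n = bN n := by simp only [hw, hδ]; ring
      rw [this]
      exact le_min hxIcc.2 (by linarith [hrpos n])
  have hconv := hx w δ hδtend hxball
  have hball : ∀ n : ℕ, Metric.closedBall (w n) (δ n) = Set.Icc (aN n) (bN n) := by
    intro n
    rw [Real.closedBall_eq_Icc]
    congr 1 <;> simp only [hw, hδ] <;> ring
  have havgeq : ∀ n : ℕ,
      (⨍ z in Metric.closedBall (w n) (δ n), g z) = ⨍ z in Jset x ((2:ℝ)⁻¹ ^ n), u₀ z := by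
    intro n
    rw [hball n]
    have hIccIoo : (volume : Measure ℝ).restrict (Set.Icc (aN n) (bN n)) =
        (volume : Measure ℝ).restrict (Set.Ioo (aN n) (bN n)) :=
      (Measure.restrict_congr_set Ioo_ae_eq_Icc).symm
    show average ((volume : Measure ℝ).restrict (Set.Icc (aN n) (bN n))) g = _
    rw [hIccIoo]
    have hsub : Set.Ioo (aN n) (bN n) ⊆ Set.Ioo (0:ℝ) 1 := Jset_subset x _
    apply average_congr
    rw [Filter.EventuallyEq, ae_restrict_iff' measurableSet_Ioo]
    exact Eventually.of_forall fun z hz => Set.indicator_of_mem (hsub hz) u₀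
  have hgx : g x = u₀ x := Set.indicator_of_mem hxI u₀
  rw [← hgx]
  have : (fun n : ℕ => ⨍ z in Jset x ((2:ℝ)⁻¹ ^ n), u₀ z) =
      fun n : ℕ => ⨍ z in Metric.closedBall (w n) (δ n), g z := by
    ext n; rw [havgeq n]
  rw [this]
  exact hconv

/-- For `p > 2`, a function `u ∈ Lᵖ(0,1)` with finite Gagliardo-type energy
`∫∫ |u x - u y|ᵖ/|x-y|ᵖ` has a representative which is Hölder continuous on `[0,1]`
with exponent `(p-2)/p`. -/
theorem stmt1 (p : ℝ) (hp : 2 < p)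
    (u : ℝ → ℝ) (hu : MemLp u (ENNReal.ofReal p) muI)
    (hfin : ∫⁻ q : ℝ × ℝ, ENNReal.ofReal (|u q.1 - u q.2| ^ p / |q.1 - q.2| ^ p) ∂muS < ∞) :
    ∃ v : ℝ → ℝ, (∀ᵐ x ∂muI, v x = u x) ∧
      ∃ C : ℝ, ∀ x ∈ Set.Icc (0:ℝ) 1, ∀ y ∈ Set.Icc (0:ℝ) 1,
        |v x - v y| ≤ C * |x - y| ^ ((p - 2) / p) := by
  have hp0 : (0:ℝ) < p := by linarith
  have hp1 : (1:ℝ) < p := by linarith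
  have hα : (0:ℝ) < (p - 2)/p := div_pos (by linarith) hp0
  have hα1 : (p - 2)/p ≤ 1 := by
    rw [div_le_one hp0]; linarith
  -- measurable representative
  set u₀ : ℝ → ℝ := (hu.1.mk u) with hu₀def
  have hsm : StronglyMeasurable u₀ := hu.1.stronglyMeasurable_mk
  have hueq : u =ᵐ[muI] u₀ := hu.1.ae_eq_mk
  have hm : Measurable u₀ := hsm.measurable
  haveI : IsFiniteMeasure muI := ⟨by simp [muI]⟩
  have hint' : Integrable u muI := hu.integrable (by
    rw [ENNReal.one_le_ofReal]; linarith)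
  have hint0 : Integrable u₀ muI := hint'.congr hueq
  have hint : IntegrableOn u₀ (Set.Ioo 0 1) volume := hint0
  -- transfer the energy to u₀
  have haeS : ∀ᵐ q : ℝ × ℝ ∂muS, u q.1 = u₀ q.1 ∧ u q.2 = u₀ q.2 := by
    have hN : muI {x | u x ≠ u₀ x} = 0 := hueq
    set N : Set ℝ := toMeasurable muI {x | u x ≠ u₀ x} with hNdef
    have hNm : MeasurableSet N := measurableSet_toMeasurable _ _
    have hN0 : muI N = 0 := by rw [hNdef, measure_toMeasurable]; exact hN
    have h1 : muS {q : ℝ × ℝ | u q.1 ≠ u₀ q.1} = 0 := by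
      refine measure_mono_null (fun q hq => ?_) (?_ : muS (N ×ˢ Set.univ) = 0)
      · exact ⟨subset_toMeasurable _ _ hq, Set.mem_univ _⟩
      · rw [muS, Measure.prod_prod, hN0, zero_mul]
    have h2 : muS {q : ℝ × ℝ | u q.2 ≠ u₀ q.2} = 0 := by
      refine measure_mono_null (fun q hq => ?_) (?_ : muS (Set.univ ×ˢ N) = 0)
      · exact ⟨Set.mem_univ _, subset_toMeasurable _ _ hq⟩
      · rw [muS, Measure.prod_prod, hN0, mul_zero]
    rw [eventually_and]
    constructor
    · exact (ae_iff).2 h1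
    · exact (ae_iff).2 h2
  set M : ℝ≥0∞ := ∫⁻ q : ℝ × ℝ, ENNReal.ofReal (|u₀ q.1 - u₀ q.2| ^ p / |q.1 - q.2| ^ p) ∂muS
    with hMdef
  have hMeq : M = ∫⁻ q : ℝ × ℝ, ENNReal.ofReal (|u q.1 - u q.2| ^ p / |q.1 - q.2| ^ p) ∂muS := by
    rw [hMdef]
    apply lintegral_congr_ae
    filter_upwards [haeS] with q hq
    rw [hq.1, hq.2]
  have hM : M ≠ ⊤ := by rw [hMeq]; exact hfin.ne
  have hE : ∫⁻ q : ℝ × ℝ, ENNReal.ofReal (|u₀ q.1 - u₀ q.2| ^ p / |q.1 - q.2| ^ p) ∂muS ≤ M :=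
    le_of_eq rfl
  -- the dyadic averages
  set Av : ℕ → ℝ → ℝ := fun n x => ⨍ z in Jset x ((2:ℝ)⁻¹ ^ n), u₀ z with hAv
  set ρ : ℝ := (2:ℝ)⁻¹ ^ ((p - 2)/p) with hρdef
  have hρ0 : 0 ≤ ρ := Real.rpow_nonneg (by norm_num) _
  have hρ1 : ρ < 1 := Real.rpow_lt_one (by norm_num) (by norm_num) hα
  set Ep : ℝ := M.toReal ^ (1/p) with hEpdef
  have hEp : 0 ≤ Ep := Real.rpow_nonneg ENNReal.toReal_nonneg _
  have hchain : ∀ x ∈ Set.Icc (0:ℝ) 1, ∀ n : ℕ,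
      dist (Av n x) (Av (n+1) x) ≤ (4 * Ep) * ρ ^ n := by
    intro x hx n
    rw [Real.dist_eq]
    exact chain_bound p hp u₀ hm hint M hM hE x hx n
  -- the limit function
  set v : ℝ → ℝ := fun x => limUnder atTop (fun n => Av n x) with hvdef
  have htend : ∀ x ∈ Set.Icc (0:ℝ) 1, Tendsto (fun n => Av n x) atTop (𝓝 (v x)) := by
    intro x hx
    have hc : CauchySeq (fun n => Av n x) :=
      cauchySeq_of_le_geometric ρ (4 * Ep) hρ1 (hchain x hx)
    obtain ⟨l, hl⟩ := cauchySeq_tendsto_of_complete hc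
    have hvl : v x = l := hl.limUnder_eq
    rwa [hvl]
  have hdistv : ∀ x ∈ Set.Icc (0:ℝ) 1, ∀ n : ℕ,
      dist (Av n x) (v x) ≤ (4 * Ep) * ρ ^ n / (1 - ρ) := by
    intro x hx n
    exact dist_le_of_le_geometric_of_tendsto ρ (4 * Ep) hρ1 (hchain x hx) (htend x hx) n
  refine ⟨v, ?_, ?_⟩
  · -- a.e. equality
    filter_upwards [ae_tendsto_Av u₀ hm hint, hueq,
      (show ∀ᵐ x ∂muI, x ∈ Set.Ioo (0:ℝ) 1 from ae_restrict_mem measurableSet_Ioo)]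
      with x hxt hxe hxI
    have hxIcc : x ∈ Set.Icc (0:ℝ) 1 := Set.mem_Icc_of_Ioo hxI
    have := tendsto_nhds_unique (htend x hxIcc) hxt
    rw [this, hxe]
  · -- Hölder continuity
    refine ⟨2 * (2 * (4 * Ep) / (1 - ρ) + 3 * Ep), ?_⟩
    intro x hx y hy
    rcases eq_or_ne x y with rfl | hxy
    · simp only [sub_self, abs_zero]
      rw [Real.zero_rpow (ne_of_gt hα), mul_zero]
    have hd : 0 < |x - y| := abs_pos.2 (sub_ne_zero.2 hxy)
    have hd1 : |x - y| ≤ 1 := by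
      rw [abs_le]
      constructor <;> [linarith [hx.1, hy.2]; linarith [hx.2, hy.1]]
    -- choose the scale
    have hex : ∃ m : ℕ, (2:ℝ)⁻¹ ^ m < |x - y| := exists_pow_lt_of_lt_one hd (by norm_num)
    have hm0 : Nat.find hex ≠ 0 := by
      intro h0
      have := Nat.find_spec hex
      rw [h0] at this
      simp at this
      linarith
    set n : ℕ := Nat.find hex - 1 with hn
    have hsucc : n + 1 = Nat.find hex := Nat.succ_pred_eq_of_pos (Nat.pos_of_ne_zero hm0)
    have hdn : |x - y| ≤ (2:ℝ)⁻¹ ^ n :=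
      le_of_not_gt (Nat.find_min hex (by omega))
    have hn2 : (2:ℝ)⁻¹ ^ n < 2 * |x - y| := by
      have hspec : (2:ℝ)⁻¹ ^ (n + 1) < |x - y| := by
        rw [hsucc]; exact Nat.find_spec hex
      rw [pow_succ] at hspec
      linarith
    have h1ρ : 0 < 1 - ρ := by linarith
    have hmid := mid_bound p hp u₀ hm hint M hM hE x y hx hy n hdn
    have h1 := hdistv x hx n
    have h2 := hdistv y hy n
    have hcoef : 0 ≤ 2 * (4 * Ep) / (1 - ρ) + 3 * Ep :=
      add_nonneg (div_nonneg (by positivity) h1ρ.le) (by positivity)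
    calc |v x - v y| = dist (v x) (v y) := (Real.dist_eq _ _).symm
      _ ≤ dist (v x) (Av n x) + dist (Av n x) (Av n y) + dist (Av n y) (v y) :=
          dist_triangle4 _ _ _ _
      _ ≤ (4 * Ep) * ρ ^ n / (1 - ρ) + (3 * Ep) * ρ ^ n + (4 * Ep) * ρ ^ n / (1 - ρ) := by
          apply add_le_add (add_le_add ?_ ?_) (h2)
          · rw [dist_comm]; exact h1
          · rw [Real.dist_eq]; exact hmid
      _ = (2 * (4 * Ep) / (1 - ρ) + 3 * Ep) * ρ ^ n := by
          field_simp
          ring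
      _ ≤ (2 * (4 * Ep) / (1 - ρ) + 3 * Ep) * (2 * |x - y| ^ ((p - 2)/p)) := by
          apply mul_le_mul_of_nonneg_left ?_ hcoef
          have e1 : ρ ^ n = ((2:ℝ)⁻¹ ^ n : ℝ) ^ ((p - 2)/p) := (rn_pow_alpha p hp n).symm
          rw [e1]
          calc ((2:ℝ)⁻¹ ^ n : ℝ) ^ ((p - 2)/p) ≤ (2 * |x - y|) ^ ((p - 2)/p) :=
                Real.rpow_le_rpow (by positivity) hn2.le hα.le
            _ = 2 ^ ((p - 2)/p) * |x - y| ^ ((p - 2)/p) :=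
                Real.mul_rpow (by norm_num) (abs_nonneg _)
            _ ≤ 2 * |x - y| ^ ((p - 2)/p) := by
                have h22 : (2:ℝ) ^ ((p - 2)/p) ≤ 2 ^ (1:ℝ) :=
                  Real.rpow_le_rpow_of_exponent_le (by norm_num) hα1
                rw [Real.rpow_one] at h22
                exact mul_le_mul_of_nonneg_right h22 (Real.rpow_nonneg (abs_nonneg _) _)
      _ = 2 * (2 * (4 * Ep) / (1 - ρ) + 3 * Ep) * |x - y| ^ ((p - 2)/p) := by ring
end

section
/- The map u ↦ ‖u‖_{L^p(0,1)} + ‖Du‖_{L^p((0,1)²)} defines a norm on NW^{1,p}(0,1) = {u ∈ L^p(0,1) : Du ∈ L^p((0,1)²)}, where Du(x,X) = (u(X)-u(x))/(X-x), and NW^{1,p}(0,1) equipped with this norm is a Banach space for 1 ≤ p < ∞. -/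
open MeasureTheory Set Real Filter Topology
open scoped ENNReal NNReal

instance : SigmaFinite muI := by unfold muI; infer_instance

lemma ae_pair {P : ℝ → Prop} (h : ∀ᵐ x ∂muI, P x) :
    ∀ᵐ q : ℝ × ℝ ∂muS, P q.1 ∧ P q.2 := by
  unfold muS
  exact (Measure.quasiMeasurePreserving_fst.ae h).and
    (Measure.quasiMeasurePreserving_snd.ae h)

lemma Du_congr {u v : ℝ → ℝ} (h : u =ᵐ[muI] v) : Du u =ᵐ[muS] Du v := by
  filter_upwards [ae_pair h] with q hq
  simp only [Du, hq.1, hq.2]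

lemma Du_add (u v : ℝ → ℝ) : Du (u + v) = Du u + Du v := by
  funext q; simp only [Du, Pi.add_apply]; ring

lemma Du_sub (u v : ℝ → ℝ) : Du (u - v) = Du u - Du v := by
  funext q; simp only [Du, Pi.sub_apply]; ring

lemma Du_smul (c : ℝ) (u : ℝ → ℝ) : Du (c • u) = c • Du u := by
  funext q; simp only [Du, Pi.smul_apply, smul_eq_mul]; ring

/-- `u ↦ ‖u‖_{Lᵖ} + ‖Du‖_{Lᵖ}` is a norm on `NW^{1,p}(0,1)` (finite, subadditive,
absolutely homogeneous, definite) and the space is complete for this norm. -/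
theorem stmt3 (p : ℝ≥0∞) [Fact (1 ≤ p)] (hp : p ≠ ∞) :
    ∀ S : Set (Lp ℝ p muI), S = {u : Lp ℝ p muI | MemLp (Du ⇑u) p muS} →
    ∀ N : Lp ℝ p muI → ℝ≥0∞,
      N = (fun (u : Lp ℝ p muI) => eLpNorm (⇑u) p muI + eLpNorm (Du ⇑u) p muS) →
    (∀ u ∈ S, N u ≠ ∞) ∧
    (∀ u ∈ S, ∀ v ∈ S, (u + v) ∈ S ∧ N (u + v) ≤ N u + N v) ∧
    (∀ (c : ℝ), ∀ u ∈ S, (c • u) ∈ S ∧ N (c • u) = ENNReal.ofReal |c| * N u) ∧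
    (∀ u ∈ S, (N u = 0 ↔ u = 0)) ∧
    (∀ f : ℕ → Lp ℝ p muI, (∀ n, f n ∈ S) →
      (∀ ε : ℝ≥0∞, 0 < ε → ∃ n₀ : ℕ, ∀ m ≥ n₀, ∀ n ≥ n₀, N (f m - f n) < ε) →
      ∃ u ∈ S, Tendsto (fun n => N (f n - u)) atTop (𝓝 0)) := by
  intro S hS N hN
  subst hS; subst hN
  have hp1 : (1 : ℝ≥0∞) ≤ p := Fact.out
  have hp0 : p ≠ 0 := (lt_of_lt_of_le zero_lt_one hp1).ne'
  have key_add : ∀ u v : Lp ℝ p muI, Du ⇑(u + v) =ᵐ[muS] Du ⇑u + Du ⇑v := fun u v =>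
    (Du_congr (Lp.coeFn_add u v)).trans (by rw [Du_add])
  have key_sub : ∀ u v : Lp ℝ p muI, Du ⇑(u - v) =ᵐ[muS] Du ⇑u - Du ⇑v := fun u v =>
    (Du_congr (Lp.coeFn_sub u v)).trans (by rw [Du_sub])
  refine ⟨?_, ?_, ?_, ?_, ?_⟩
  · -- finiteness
    intro u hu
    exact ENNReal.add_ne_top.mpr ⟨Lp.eLpNorm_ne_top u, hu.eLpNorm_ne_top⟩
  · -- subadditivity
    intro u hu v hv
    constructor
    · exact ((hu.add hv).ae_eq (key_add u v).symm)
    · calc eLpNorm (⇑(u + v)) p muI + eLpNorm (Du ⇑(u + v)) p muS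
          = eLpNorm (⇑u + ⇑v) p muI + eLpNorm (Du ⇑u + Du ⇑v) p muS := by
            rw [eLpNorm_congr_ae (Lp.coeFn_add u v), eLpNorm_congr_ae (key_add u v)]
        _ ≤ (eLpNorm (⇑u) p muI + eLpNorm (⇑v) p muI)
            + (eLpNorm (Du ⇑u) p muS + eLpNorm (Du ⇑v) p muS) :=
            add_le_add
              (eLpNorm_add_le (Lp.aestronglyMeasurable u) (Lp.aestronglyMeasurable v) hp1)
              (eLpNorm_add_le hu.aestronglyMeasurable hv.aestronglyMeasurable hp1)
        _ = _ := by rw [add_add_add_comm]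
  · -- homogeneity
    intro c u hu
    have hsm : Du ⇑(c • u) =ᵐ[muS] c • Du ⇑u :=
      (Du_congr (Lp.coeFn_smul c u)).trans (by rw [Du_smul])
    constructor
    · exact (hu.const_smul c).ae_eq hsm.symm
    · beta_reduce
      rw [eLpNorm_congr_ae (Lp.coeFn_smul c u), eLpNorm_congr_ae hsm,
        eLpNorm_const_smul, eLpNorm_const_smul, ← mul_add, Real.enorm_eq_ofReal_abs]
  · -- definiteness
    intro u hu
    constructor
    · intro h
      have h1 : eLpNorm (⇑u) p muI = 0 := by
        have := add_eq_zero.mp h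
        exact this.1
      rw [eLpNorm_eq_zero_iff (Lp.aestronglyMeasurable u) hp0] at h1
      exact Lp.eq_zero_iff_ae_eq_zero.mpr h1
    · intro h
      subst h
      have h1 : eLpNorm (⇑(0 : Lp ℝ p muI)) p muI = 0 := by
        rw [eLpNorm_congr_ae (Lp.coeFn_zero ℝ p muI), eLpNorm_zero]
      have h2 : eLpNorm (Du ⇑(0 : Lp ℝ p muI)) p muS = 0 := by
        have : Du ⇑(0 : Lp ℝ p muI) =ᵐ[muS] 0 := by
          refine (Du_congr (Lp.coeFn_zero ℝ p muI)).trans ?_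
          have : Du (0 : ℝ → ℝ) = 0 := by funext q; simp [Du]
          rw [this]
        rw [eLpNorm_congr_ae this, eLpNorm_zero]
      beta_reduce
      rw [h1, h2, add_zero]
  · -- completeness
    intro f hf hC
    set g : ℕ → Lp ℝ p muS := fun n => (hf n).toLp (Du ⇑(f n)) with hgdef
    have hgfn : ∀ n, ⇑(g n) =ᵐ[muS] Du ⇑(f n) := fun n => (hf n).coeFn_toLp
    -- Cauchy for f in Lp muI
    have cauchy_f : CauchySeq f := by
      refine Metric.cauchySeq_iff.mpr fun ε hε => ?_
      obtain ⟨n₀, h₀⟩ := hC (ENNReal.ofReal ε) (by simpa using hε)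
      refine ⟨n₀, fun m hm n hn => ?_⟩
      have h1 : eLpNorm (⇑(f m - f n)) p muI < ENNReal.ofReal ε :=
        lt_of_le_of_lt le_self_add (h₀ m hm n hn)
      rw [dist_eq_norm, Lp.norm_def]
      exact ENNReal.toReal_lt_of_lt_ofReal h1
    have cauchy_g : CauchySeq g := by
      refine Metric.cauchySeq_iff.mpr fun ε hε => ?_
      obtain ⟨n₀, h₀⟩ := hC (ENNReal.ofReal ε) (by simpa using hε)
      refine ⟨n₀, fun m hm n hn => ?_⟩
      have hco : ⇑(g m - g n) =ᵐ[muS] Du ⇑(f m - f n) := by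
        refine (Lp.coeFn_sub (g m) (g n)).trans ?_
        refine (((hgfn m).sub (hgfn n)).trans ?_)
        exact (key_sub (f m) (f n)).symm
      have h1 : eLpNorm (⇑(g m - g n)) p muS < ENNReal.ofReal ε := by
        rw [eLpNorm_congr_ae hco]
        exact lt_of_le_of_lt le_add_self (h₀ m hm n hn)
      rw [dist_eq_norm, Lp.norm_def]
      exact ENNReal.toReal_lt_of_lt_ofReal h1
    obtain ⟨u, hu⟩ := cauchySeq_tendsto_of_complete cauchy_f
    obtain ⟨G, hG⟩ := cauchySeq_tendsto_of_complete cauchy_g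
    -- eLpNorm convergence
    have norm_to_eLp : ∀ {α : Type} [inst : MeasurableSpace α] (μ : Measure α)
        (a : Lp ℝ p μ), ENNReal.ofReal ‖a‖ = eLpNorm (⇑a) p μ := by
      intro α inst μ a
      rw [Lp.norm_def, ENNReal.ofReal_toReal (Lp.eLpNorm_ne_top a)]
    have hfu : Tendsto (fun n => eLpNorm (⇑(f n) - ⇑u) p muI) atTop (𝓝 0) := by
      have heq : ∀ n, eLpNorm (⇑(f n) - ⇑u) p muI = ENNReal.ofReal ‖f n - u‖ := fun n => by
        rw [← eLpNorm_congr_ae (Lp.coeFn_sub (f n) u), norm_to_eLp]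
      simp_rw [heq]
      have : Tendsto (fun n => ‖f n - u‖) atTop (𝓝 0) :=
        tendsto_iff_norm_sub_tendsto_zero.mp hu
      simpa using ENNReal.tendsto_ofReal this
    have hgu : Tendsto (fun n => eLpNorm (⇑(g n) - ⇑G) p muS) atTop (𝓝 0) := by
      have heq : ∀ n, eLpNorm (⇑(g n) - ⇑G) p muS = ENNReal.ofReal ‖g n - G‖ := fun n => by
        rw [← eLpNorm_congr_ae (Lp.coeFn_sub (g n) G), norm_to_eLp]
      simp_rw [heq]
      have : Tendsto (fun n => ‖g n - G‖) atTop (𝓝 0) :=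
        tendsto_iff_norm_sub_tendsto_zero.mp hG
      simpa using ENNReal.tendsto_ofReal this
    -- a.e. convergent subsequence for f
    have tim_f : TendstoInMeasure muI (fun n => ⇑(f n)) atTop ⇑u :=
      tendstoInMeasure_of_tendsto_eLpNorm hp0 (fun n => Lp.aestronglyMeasurable (f n))
        (Lp.aestronglyMeasurable u) hfu
    obtain ⟨ns, hns, hae1⟩ := tim_f.exists_seq_tendsto_ae
    -- a.e. convergent subsubsequence for g
    have hgu' : Tendsto (fun i => eLpNorm (⇑(g (ns i)) - ⇑G) p muS) atTop (𝓝 0) :=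
      hgu.comp hns.tendsto_atTop
    have tim_g : TendstoInMeasure muS (fun i => ⇑(g (ns i))) atTop ⇑G :=
      tendstoInMeasure_of_tendsto_eLpNorm hp0 (fun i => Lp.aestronglyMeasurable (g (ns i)))
        (Lp.aestronglyMeasurable G) hgu'
    obtain ⟨ms, hms, hae2⟩ := tim_g.exists_seq_tendsto_ae
    have hae3 : ∀ᵐ q ∂muS, ∀ j : ℕ, ⇑(g (ns (ms j))) q = Du ⇑(f (ns (ms j))) q :=
      ae_all_iff.mpr fun j => hgfn (ns (ms j))
    -- the key identification
    have hkey : Du ⇑u =ᵐ[muS] ⇑G := by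
      filter_upwards [ae_pair hae1, hae2, hae3] with q hq1 hq2 hq3
      have hL1 : Tendsto (fun j => ⇑(f (ns (ms j))) q.1) atTop (𝓝 (⇑u q.1)) :=
        hq1.1.comp hms.tendsto_atTop
      have hL2 : Tendsto (fun j => ⇑(f (ns (ms j))) q.2) atTop (𝓝 (⇑u q.2)) :=
        hq1.2.comp hms.tendsto_atTop
      have hL : Tendsto (fun j => Du ⇑(f (ns (ms j))) q) atTop (𝓝 (Du ⇑u q)) := by
        simpa only [Du] using (hL2.sub hL1).div_const (q.2 - q.1)
      have hR : Tendsto (fun j => Du ⇑(f (ns (ms j))) q) atTop (𝓝 (⇑G q)) := by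
        simpa only [hq3] using hq2
      exact tendsto_nhds_unique hL hR
    have huS : MemLp (Du ⇑u) p muS := (Lp.memLp G).ae_eq hkey.symm
    refine ⟨u, huS, ?_⟩
    have term2 : ∀ n, eLpNorm (Du ⇑(f n - u)) p muS = eLpNorm (⇑(g n) - ⇑G) p muS := by
      intro n
      refine eLpNorm_congr_ae ?_
      refine (key_sub (f n) u).trans ?_
      exact ((hgfn n).symm.sub hkey)
    have term1 : ∀ n, eLpNorm (⇑(f n - u)) p muI = eLpNorm (⇑(f n) - ⇑u) p muI := fun n =>
      eLpNorm_congr_ae (Lp.coeFn_sub (f n) u)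
    have : Tendsto (fun n => eLpNorm (⇑(f n) - ⇑u) p muI + eLpNorm (⇑(g n) - ⇑G) p muS)
        atTop (𝓝 0) := by
      simpa using hfu.add hgu
    refine this.congr fun n => ?_
    beta_reduce
    rw [term1 n, term2 n]
end

section
/- Let W : (0,1) × ℝ × ℝ → ℝ be measurable in its first variable, continuous in the last two variables, and bounded below by a constant. Define E(u) = ∫₀¹∫₀¹ W(x, u(x), Du(x,X)) dX dx with Du(x,X) = (u(X)-u(x))/(X-x). If u_j → u strongly in L^p(0,1), then E(u) ≤ liminf_{j→∞} E(u_j). -/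
open MeasureTheory Set Real Filter Topology
open scoped ENNReal NNReal

/-- Lower semicontinuity of the nonlocal energy `E(u) = ∫∫ W(x, u(x), Du(x,X))` along
strong `Lᵖ` convergent sequences: for a Carathéodory integrand `W` bounded below
(no convexity assumed), `E(u) ≤ liminf E(u_j)`.  The functional is encoded as an
extended-real lower integral of the (nonnegative) integrand shifted by a lower bound. -/
theorem stmt7 (p : ℝ≥0∞) (hp1 : 1 ≤ p) (hp2 : p ≠ ∞)
    (W : ℝ → ℝ → ℝ → ℝ)
    (hWx : ∀ a b : ℝ, Measurable fun x => W x a b)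
    (hWc : ∀ x : ℝ, Continuous fun q : ℝ × ℝ => W x q.1 q.2)
    (c : ℝ) (hWbd : ∀ x a b : ℝ, c ≤ W x a b)
    (E : (ℝ → ℝ) → ℝ≥0∞)
    (hE : E = fun u => ∫⁻ z : ℝ × ℝ, ENNReal.ofReal (W z.1 (u z.1) (Du u z) - c) ∂muS)
    (useq : ℕ → ℝ → ℝ) (u : ℝ → ℝ)
    (hmem : ∀ j, MemLp (useq j) p muI) (hu : MemLp u p muI)
    (hconv : Tendsto (fun j => eLpNorm (useq j - u) p muI) atTop (𝓝 0)) :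
    E u ≤ Filter.liminf (fun j => E (useq j)) atTop := by
  classical
  have hp0 : p ≠ 0 := (zero_lt_one.trans_le hp1).ne'
  haveI : IsFiniteMeasure muI := by
    constructor
    rw [muI, Measure.restrict_apply_univ, Real.volume_Ioo]
    exact ENNReal.ofReal_lt_top
  -- basic facts about the measures
  have hWmeas : Measurable (fun q : (ℝ × ℝ) × ℝ => W q.2 q.1.1 q.1.2) :=
    measurable_uncurry_of_continuous_of_measurable
      (u := fun (q : ℝ × ℝ) (x : ℝ) => W x q.1 q.2) hWc (fun q => hWx q.1 q.2)
  have hqmp_fst : Measure.QuasiMeasurePreserving Prod.fst muS muI :=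
    Measure.quasiMeasurePreserving_fst
  have hqmp_snd : Measure.QuasiMeasurePreserving Prod.snd muS muI :=
    Measure.quasiMeasurePreserving_snd
  -- the diagonal is muS-null
  have hdiag : ∀ᵐ z : ℝ × ℝ ∂muS, z.2 - z.1 ≠ 0 := by
    have hm : MeasurableSet {z : ℝ × ℝ | z.2 - z.1 = 0} :=
      measurableSet_eq_fun (measurable_snd.sub measurable_fst) measurable_const
    rw [ae_iff]
    have h0 : muS {z : ℝ × ℝ | ¬ z.2 - z.1 ≠ 0} = muS {z : ℝ × ℝ | z.2 - z.1 = 0} := by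
      congr 1; ext z; simp
    rw [h0, muS, Measure.prod_apply hm]
    have hx : ∀ x : ℝ, muI (Prod.mk x ⁻¹' {z : ℝ × ℝ | z.2 - z.1 = 0}) = 0 := by
      intro x
      have hpre : Prod.mk x ⁻¹' {z : ℝ × ℝ | z.2 - z.1 = 0} = {x} := by
        ext y; simp [sub_eq_zero, eq_comm]
      rw [hpre]
      refine le_antisymm ?_ zero_le
      calc muI {x} ≤ volume {x} := Measure.restrict_le_self _
        _ = 0 := Real.volume_singleton
    rw [lintegral_congr hx, lintegral_zero]
  -- aemeasurability of the integrand for any function aemeasurable on muI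
  have haemeas : ∀ v : ℝ → ℝ, AEMeasurable v muI →
      AEMeasurable (fun z : ℝ × ℝ => ENNReal.ofReal (W z.1 (v z.1) (Du v z) - c)) muS := by
    intro v hv
    have hv1 : AEMeasurable (fun z : ℝ × ℝ => v z.1) muS :=
      hv.comp_quasiMeasurePreserving hqmp_fst
    have hv2 : AEMeasurable (fun z : ℝ × ℝ => v z.2) muS :=
      hv.comp_quasiMeasurePreserving hqmp_snd
    have hDu : AEMeasurable (Du v) muS :=
      (hv2.sub hv1).div ((measurable_snd.sub measurable_fst).aemeasurable)
    have hinner : AEMeasurable (fun z : ℝ × ℝ => ((v z.1, Du v z), z.1)) muS :=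
      ((hv1.prodMk hDu)).prodMk measurable_fst.aemeasurable
    have hW : AEMeasurable (fun z : ℝ × ℝ => W z.1 (v z.1) (Du v z)) muS :=
      hWmeas.comp_aemeasurable hinner
    exact ENNReal.measurable_ofReal.comp_aemeasurable (hW.sub aemeasurable_const)
  -- key claim: along any subsequence with a.e. convergence we control E u
  by_contra hcon
  push_neg at hcon
  obtain ⟨b, hb1, hb2⟩ := exists_between hcon
  have hfreq : ∃ᶠ j in atTop, E (useq j) < b :=
    frequently_lt_of_liminf_lt (by isBoundedDefault) hb1
  obtain ⟨φ, hφmono, hφlt⟩ := Filter.extraction_of_frequently_atTop hfreq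
  -- Lᵖ convergence along the subsequence φ, hence convergence in measure
  have hconvφ : Tendsto (fun k => eLpNorm (useq (φ k) - u) p muI) atTop (𝓝 0) :=
    hconv.comp hφmono.tendsto_atTop
  have hTIM : TendstoInMeasure muI (fun k => useq (φ k)) atTop u :=
    tendstoInMeasure_of_tendsto_eLpNorm hp0
      (fun k => (hmem (φ k)).aestronglyMeasurable) hu.aestronglyMeasurable hconvφ
  obtain ⟨ψ, hψmono, hψae⟩ := hTIM.exists_seq_tendsto_ae
  set g : ℕ → ℝ → ℝ := fun k => useq (φ (ψ k)) with hg
  -- transfer a.e. convergence to the product measure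
  have hfst : ∀ᵐ z : ℝ × ℝ ∂muS, Tendsto (fun k => g k z.1) atTop (𝓝 (u z.1)) :=
    hqmp_fst.tendsto_ae.eventually hψae
  have hsnd : ∀ᵐ z : ℝ × ℝ ∂muS, Tendsto (fun k => g k z.2) atTop (𝓝 (u z.2)) :=
    hqmp_snd.tendsto_ae.eventually hψae
  -- pointwise convergence of the integrand
  have hptw : ∀ᵐ z : ℝ × ℝ ∂muS,
      Tendsto (fun k => ENNReal.ofReal (W z.1 (g k z.1) (Du (g k) z) - c)) atTop
        (𝓝 (ENNReal.ofReal (W z.1 (u z.1) (Du u z) - c))) := by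
    filter_upwards [hfst, hsnd, hdiag] with z h1 h2 h3
    have hDu : Tendsto (fun k => Du (g k) z) atTop (𝓝 (Du u z)) := by
      simp only [Du]
      exact (h2.sub h1).div tendsto_const_nhds h3
    have hWz : Tendsto (fun k => W z.1 (g k z.1) (Du (g k) z)) atTop
        (𝓝 (W z.1 (u z.1) (Du u z))) :=
      ((hWc z.1).tendsto _).comp (h1.prodMk_nhds hDu)
    exact (ENNReal.continuous_ofReal.tendsto _).comp (hWz.sub tendsto_const_nhds)
  -- Fatou's lemma
  have hEu : E u ≤ liminf (fun k => E (g k)) atTop := by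
    simp only [hE]
    have h1 : (∫⁻ z : ℝ × ℝ, ENNReal.ofReal (W z.1 (u z.1) (Du u z) - c) ∂muS)
        = ∫⁻ z : ℝ × ℝ, liminf (fun k => ENNReal.ofReal (W z.1 (g k z.1) (Du (g k) z) - c))
            atTop ∂muS := by
      refine lintegral_congr_ae ?_
      filter_upwards [hptw] with z hz
      exact hz.liminf_eq.symm
    rw [h1]
    exact lintegral_liminf_le' fun k => haemeas (g k) (hmem (φ (ψ k))).aestronglyMeasurable.aemeasurable
  -- conclude: every term of the sub-subsequence is < b
  have hle : liminf (fun k => E (g k)) atTop ≤ b := by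
    refine liminf_le_of_frequently_le' ?_
    exact Frequently.of_forall fun k => (hφlt (ψ k)).le
  exact absurd (hEu.trans hle) (not_le.mpr hb2)
end

section
/- Let p > 2, and let W : (0,1)×ℝ×ℝ → ℝ be measurable in x, continuous in (u,U), and satisfy the coercivity bound C₀(|U|^p − 1) ≤ W(x,u,U) for some C₀ > 0. Consider E(u) = ∫₀¹∫₀¹ W(x,u(x),Du(x,X)) dX dx over the class A of functions u ∈ L^p(0,1) with Du ∈ L^p((0,1)²) and (continuous representative satisfying) u(0)=0, u(1)=0. If E is finite for some u ∈ A, then E attains its minimum on A. -/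
open MeasureTheory Set Real Filter Topology
open scoped ENNReal NNReal

lemma muI_univ : muI Set.univ = 1 := by
  simp [muI, Real.volume_Ioo]

instance : IsProbabilityMeasure muI := ⟨muI_univ⟩

lemma muS_eq : muS = (volume.prod volume).restrict ((Set.Ioo 0 1) ×ˢ (Set.Ioo 0 1)) := by
  rw [muS, muI, Measure.prod_restrict]

lemma muS_map_fst : muS.map Prod.fst = muI := by
  rw [muS, Measure.map_fst_prod, muI_univ, one_smul]

lemma muS_map_snd : muS.map Prod.snd = muI := by
  rw [muS, Measure.map_snd_prod, muI_univ, one_smul]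

lemma ae_fst {Q : ℝ → Prop} (h : ∀ᵐ x ∂muI, Q x) : ∀ᵐ z : ℝ × ℝ ∂muS, Q z.1 :=
  ae_of_ae_map measurable_fst.aemeasurable (muS_map_fst ▸ h)

lemma ae_snd {Q : ℝ → Prop} (h : ∀ᵐ x ∂muI, Q x) : ∀ᵐ z : ℝ × ℝ ∂muS, Q z.2 :=
  ae_of_ae_map measurable_snd.aemeasurable (muS_map_snd ▸ h)

lemma volume_prod_diag_null :
    (volume.prod volume : Measure (ℝ × ℝ)) {z : ℝ × ℝ | z.1 = z.2} = 0 := by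
  have hmeas : MeasurableSet {z : ℝ × ℝ | z.1 = z.2} :=
    isClosed_eq continuous_fst continuous_snd |>.measurableSet
  rw [Measure.prod_apply hmeas]
  have : ∀ x : ℝ, (volume (Prod.mk x ⁻¹' {z : ℝ × ℝ | z.1 = z.2})) = 0 := by
    intro x
    have : (Prod.mk x ⁻¹' {z : ℝ × ℝ | z.1 = z.2}) = {x} := by
      ext y; simp [eq_comm]
    rw [this]; simp
  simp [this]

lemma ae_ne_diag : ∀ᵐ z : ℝ × ℝ ∂muS, z.1 ≠ z.2 := by
  rw [muS_eq]
  refine ae_restrict_of_ae ?_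
  rw [ae_iff]
  simpa using volume_prod_diag_null

lemma ae_mem_I : ∀ᵐ x ∂muI, x ∈ Set.Ioo (0:ℝ) 1 := ae_restrict_mem measurableSet_Ioo

lemma aem_fst {u : ℝ → ℝ} (hu : AEMeasurable u muI) :
    AEMeasurable (fun z : ℝ × ℝ => u z.1) muS :=
  AEMeasurable.comp_measurable (muS_map_fst ▸ hu) measurable_fst

lemma aem_snd {u : ℝ → ℝ} (hu : AEMeasurable u muI) :
    AEMeasurable (fun z : ℝ × ℝ => u z.2) muS :=
  AEMeasurable.comp_measurable (muS_map_snd ▸ hu) measurable_snd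

lemma aem_Du {u : ℝ → ℝ} (hu : AEMeasurable u muI) : AEMeasurable (Du u) muS :=
  ((aem_snd hu).sub (aem_fst hu)).div
    ((measurable_snd.sub measurable_fst).aemeasurable)

lemma measW {W : ℝ → ℝ → ℝ → ℝ} (hWx : ∀ a b : ℝ, Measurable fun x => W x a b)
    (hWc : ∀ x : ℝ, Continuous fun q : ℝ × ℝ => W x q.1 q.2) :
    Measurable (Function.uncurry (fun (q : ℝ × ℝ) (x : ℝ) => W x q.1 q.2)) :=
  measurable_uncurry_of_continuous_of_measurable hWc (fun q => hWx q.1 q.2)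

lemma aem_integrand {W : ℝ → ℝ → ℝ → ℝ} (hWx : ∀ a b : ℝ, Measurable fun x => W x a b)
    (hWc : ∀ x : ℝ, Continuous fun q : ℝ × ℝ => W x q.1 q.2) (C₀ : ℝ)
    {u : ℝ → ℝ} (hu : AEMeasurable u muI) :
    AEMeasurable (fun z : ℝ × ℝ => ENNReal.ofReal (W z.1 (u z.1) (Du u z) + C₀)) muS := by
  have h1 : AEMeasurable (fun z : ℝ × ℝ => ((u z.1, Du u z), z.1)) muS :=
    ((aem_fst hu).prodMk (aem_Du hu)).prodMk measurable_fst.aemeasurable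
  have h2 : AEMeasurable (fun z : ℝ × ℝ => W z.1 (u z.1) (Du u z)) muS :=
    (measW hWx hWc).comp_aemeasurable h1
  exact ENNReal.measurable_ofReal.comp_aemeasurable (h2.add aemeasurable_const)

noncomputable def avgI (v : ℝ → ℝ) (a b : ℝ) : ℝ := (∫ z in Set.Ioo a b, v z) / (b - a)

lemma avg_sub_avg {p : ℝ} (hp : 2 < p) {v : ℝ → ℝ} (hv : ContinuousOn v (Icc 0 1))
    {Λ : ℝ≥0∞} (hΛv : ∫⁻ z, ENNReal.ofReal (|Du v z| ^ p) ∂muS ≤ Λ) (hΛ : Λ ≠ ∞)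
    {a b c d D : ℝ} (ha : 0 ≤ a) (hab : a < b) (hb : b ≤ 1)
    (hc : 0 ≤ c) (hcd : c < d) (hd : d ≤ 1)
    (hD0 : 0 ≤ D) (hD : ∀ z ∈ Ioo a b, ∀ w ∈ Ioo c d, |w - z| ≤ D) :
    |avgI v a b - avgI v c d| ≤
      D * (Λ ^ (1/p)).toReal * ((b - a) * (d - c)) ^ (-(1/p)) := by
  have hp1 : (1:ℝ) < p := by linarith
  have hp0 : (0:ℝ) < p := by linarith
  have hba : (0:ℝ) < b - a := by linarith
  have hdc : (0:ℝ) < d - c := by linarith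
  -- integrability
  have hvab : IntegrableOn v (Ioo a b) := by
    refine ((hv.mono ?_).integrableOn_Icc).mono_set Set.Ioo_subset_Icc_self
    exact Set.Icc_subset_Icc ha hb
  have hvcd : IntegrableOn v (Ioo c d) := by
    refine ((hv.mono ?_).integrableOn_Icc).mono_set Set.Ioo_subset_Icc_self
    exact Set.Icc_subset_Icc hc hd
  set I₁ := ∫ z in Set.Ioo a b, v z with hI₁
  set I₂ := ∫ z in Set.Ioo c d, v z with hI₂
  have hfin1 : volume (Ioo a b) < ⊤ := by rw [Real.volume_Ioo]; exact ENNReal.ofReal_lt_top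
  have hfin2 : volume (Ioo c d) < ⊤ := by rw [Real.volume_Ioo]; exact ENNReal.ofReal_lt_top
  have hconst2 : IntegrableOn (fun _ : ℝ => I₂) (Ioo c d) := by
    exact integrableOn_const hfin2.ne
  have key : ∀ z : ℝ, (∫ w in Set.Ioo c d, (v z - v w)) = (d - c) * v z - I₂ := by
    intro z
    rw [integral_sub (integrableOn_const (C := v z) hfin2.ne) hvcd]
    rw [setIntegral_const, Real.volume_real_Ioo_of_le hcd.le, smul_eq_mul]
  set J := ∫ z in Set.Ioo a b, (∫ w in Set.Ioo c d, (v z - v w)) with hJdef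
  have hJ : J = (d - c) * I₁ - (b - a) * I₂ := by
    rw [hJdef]
    have : (fun z => ∫ w in Set.Ioo c d, (v z - v w)) = fun z => (d - c) * v z - I₂ := by
      funext z; exact key z
    rw [this, integral_sub (hvab.const_mul _) (integrableOn_const (C := I₂) hfin1.ne),
      integral_const_mul, setIntegral_const, Real.volume_real_Ioo_of_le hab.le,
      smul_eq_mul]
  have havg : avgI v a b - avgI v c d = J / ((b - a) * (d - c)) := by
    rw [hJ]; unfold avgI; rw [← hI₁, ← hI₂]; field_simp
  -- ENNReal bound for |J|
  set μ1 := volume.restrict (Ioo a b) with hμ1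
  set μ2 := volume.restrict (Ioo c d) with hμ2
  set ρ := μ1.prod μ2 with hρ
  have hρr : ρ = (volume.prod volume).restrict ((Ioo a b) ×ˢ (Ioo c d)) := by
    rw [hρ, hμ1, hμ2, Measure.prod_restrict]
  have hvae1 : AEMeasurable v μ1 :=
    (hv.mono (Set.Ioo_subset_Icc_self.trans (Set.Icc_subset_Icc ha hb))).aemeasurable
      measurableSet_Ioo
  have hvae2 : AEMeasurable v μ2 :=
    (hv.mono (Set.Ioo_subset_Icc_self.trans (Set.Icc_subset_Icc hc hd))).aemeasurable
      measurableSet_Ioo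
  have hmapfst : ρ.map Prod.fst = (μ2 Set.univ) • μ1 := Measure.map_fst_prod
  have hmapsnd : ρ.map Prod.snd = (μ1 Set.univ) • μ2 := Measure.map_snd_prod
  have hμ2u : μ2 Set.univ ≠ 0 := by
    rw [hμ2, Measure.restrict_apply_univ, Real.volume_Ioo]
    simpa using hdc
  have hμ1u : μ1 Set.univ ≠ 0 := by
    rw [hμ1, Measure.restrict_apply_univ, Real.volume_Ioo]
    simpa using hba
  have hvfst : AEMeasurable (fun ζ : ℝ × ℝ => v ζ.1) ρ := by
    refine AEMeasurable.comp_measurable ?_ measurable_fst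
    rw [hmapfst]
    exact (aemeasurable_smul_measure_iff hμ2u).2 hvae1
  have hvsnd : AEMeasurable (fun ζ : ℝ × ℝ => v ζ.2) ρ := by
    refine AEMeasurable.comp_measurable ?_ measurable_snd
    rw [hmapsnd]
    exact (aemeasurable_smul_measure_iff hμ1u).2 hvae2
  have hF : AEMeasurable (fun ζ : ℝ × ℝ => (‖v ζ.1 - v ζ.2‖₊ : ℝ≥0∞)) ρ :=
    (hvfst.sub hvsnd).enorm
  have step1 : (‖J‖₊ : ℝ≥0∞) ≤ ∫⁻ ζ, (‖v ζ.1 - v ζ.2‖₊ : ℝ≥0∞) ∂ρ := by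
    refine (enorm_integral_le_lintegral_enorm _).trans ?_
    refine le_trans (lintegral_mono fun z => enorm_integral_le_lintegral_enorm _) ?_
    rw [lintegral_prod _ hF]
    exact le_rfl
  have hDuρ : AEMeasurable (Du v) ρ :=
    (hvsnd.sub hvfst).div ((measurable_snd.sub measurable_fst).aemeasurable)
  have hdiag : ∀ᵐ ζ : ℝ × ℝ ∂ρ, ζ.1 ≠ ζ.2 := by
    rw [hρr]
    refine ae_restrict_of_ae ?_
    rw [ae_iff]; simpa using volume_prod_diag_null
  have hptw : ∀ᵐ ζ : ℝ × ℝ ∂ρ,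
      (‖v ζ.1 - v ζ.2‖₊ : ℝ≥0∞) ≤ ENNReal.ofReal D * ENNReal.ofReal |Du v ζ| := by
    have hmem : ∀ᵐ ζ : ℝ × ℝ ∂ρ, ζ ∈ (Ioo a b) ×ˢ (Ioo c d) := by
      rw [hρr]; exact ae_restrict_mem ((measurableSet_Ioo).prod measurableSet_Ioo)
    filter_upwards [hdiag, hmem] with ζ hne hmem
    rw [← enorm_eq_nnnorm, Real.enorm_eq_ofReal_abs, ← ENNReal.ofReal_mul hD0]
    refine ENNReal.ofReal_le_ofReal ?_
    have h21 : ζ.2 - ζ.1 ≠ 0 := sub_ne_zero.2 (Ne.symm hne)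
    have habs : |v ζ.1 - v ζ.2| = |Du v ζ| * |ζ.2 - ζ.1| := by
      rw [Du, abs_div]
      rw [div_mul_cancel₀ _ (abs_ne_zero.2 h21)]
      rw [abs_sub_comm]
    rw [habs, mul_comm D]
    exact mul_le_mul_of_nonneg_left (by
      simpa [abs_sub_comm ζ.2 ζ.1] using hD ζ.1 hmem.1 ζ.2 hmem.2) (abs_nonneg _)
  have step3 : ∫⁻ ζ, (‖v ζ.1 - v ζ.2‖₊ : ℝ≥0∞) ∂ρ ≤
      ENNReal.ofReal D * ∫⁻ ζ, ENNReal.ofReal |Du v ζ| ∂ρ := by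
    refine le_trans (lintegral_mono_ae hptw) ?_
    rw [lintegral_const_mul' _ _ ENNReal.ofReal_ne_top]
  -- Hölder
  set q := Real.conjExponent p with hq
  have hconj : p.HolderConjugate q := Real.HolderConjugate.conjExponent hp1
  have step4 : ∫⁻ ζ, ENNReal.ofReal |Du v ζ| ∂ρ ≤
      (∫⁻ ζ, ENNReal.ofReal |Du v ζ| ^ p ∂ρ) ^ (1/p) * (ρ Set.univ) ^ (1/q) := by
    have := ENNReal.lintegral_mul_le_Lp_mul_Lq ρ hconj
      (f := fun ζ => ENNReal.ofReal |Du v ζ|) (g := fun _ => 1)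
      (ENNReal.measurable_ofReal.comp_aemeasurable (measurable_abs.comp_aemeasurable hDuρ)) aemeasurable_const
    simpa [ENNReal.one_rpow, lintegral_const, one_mul, mul_one] using this
  have hpow : ∀ ζ : ℝ × ℝ, ENNReal.ofReal |Du v ζ| ^ p = ENNReal.ofReal (|Du v ζ| ^ p) :=
    fun ζ => ENNReal.ofReal_rpow_of_nonneg (abs_nonneg _) hp0.le
  have step5 : ∫⁻ ζ, ENNReal.ofReal |Du v ζ| ^ p ∂ρ ≤ Λ := by
    simp only [hpow]
    refine le_trans ?_ hΛv
    rw [muS_eq, hρr]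
    refine lintegral_mono' (Measure.restrict_mono ?_ le_rfl) le_rfl
    refine Set.prod_mono ?_ ?_
    · exact fun z hz => ⟨lt_of_le_of_lt ha hz.1, lt_of_lt_of_le hz.2 hb⟩
    · exact fun z hz => ⟨lt_of_le_of_lt hc hz.1, lt_of_lt_of_le hz.2 hd⟩
  set V := (b - a) * (d - c) with hV
  have hVpos : 0 < V := mul_pos hba hdc
  have hρu : ρ Set.univ = ENNReal.ofReal V := by
    rw [hρ, ← Set.univ_prod_univ, Measure.prod_prod, hμ1, hμ2,
      Measure.restrict_apply_univ, Measure.restrict_apply_univ,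
      Real.volume_Ioo, Real.volume_Ioo, ← ENNReal.ofReal_mul hba.le]
  -- combine in ENNReal
  have hcomb : (‖J‖₊ : ℝ≥0∞) ≤
      ENNReal.ofReal D * (Λ ^ (1/p) * (ENNReal.ofReal V) ^ (1/q)) := by
    refine step1.trans (step3.trans ?_)
    refine mul_le_mul_right (step4.trans ?_) _
    rw [hρu]
    exact mul_le_mul_left (ENNReal.rpow_le_rpow step5 (one_div_nonneg.2 hp0.le)) _
  -- to reals
  have hΛfin : Λ ^ (1/p) ≠ ⊤ := ENNReal.rpow_ne_top_of_nonneg (one_div_nonneg.2 hp0.le) hΛ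
  have hRfin : ENNReal.ofReal D * (Λ ^ (1/p) * (ENNReal.ofReal V) ^ (1/q)) ≠ ⊤ := by
    refine ENNReal.mul_ne_top ENNReal.ofReal_ne_top (ENNReal.mul_ne_top hΛfin ?_)
    exact ENNReal.rpow_ne_top_of_nonneg (one_div_nonneg.2 hconj.symm.pos.le) ENNReal.ofReal_ne_top
  have hJle : |J| ≤ D * ((Λ ^ (1/p)).toReal * V ^ (1/q)) := by
    have := ENNReal.toReal_mono hRfin hcomb
    rw [← enorm_eq_nnnorm, Real.enorm_eq_ofReal_abs, ENNReal.toReal_ofReal (abs_nonneg _)] at this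
    refine this.trans_eq ?_
    rw [ENNReal.toReal_mul, ENNReal.toReal_mul, ENNReal.toReal_ofReal hD0]
    congr 1
    congr 1
    rw [← ENNReal.toReal_rpow, ENNReal.toReal_ofReal hVpos.le]
  -- final arithmetic
  have hqinv : 1/q = 1 - 1/p := by
    have h := hconj.inv_add_inv_eq_one
    rw [one_div, one_div]
    linarith
  have hVq : V ^ (1/q) = V ^ (-(1/p)) * V := by
    rw [hqinv]
    have h1 : (1 : ℝ) - 1/p = -(1/p) + 1 := by ring
    rw [h1, Real.rpow_add hVpos, Real.rpow_one]
  rw [havg, abs_div, abs_of_pos hVpos, div_le_iff₀ hVpos]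
  refine hJle.trans (le_of_eq ?_)
  rw [hVq]; ring

lemma rpow_arith {p r : ℝ} (hp0 : 0 < p) (hr : 0 < r) (k : ℕ) :
    (r/2^k) * ((r/2^k) * (r/2^(k+1)))^(-(1/p)) =
      (2:ℝ)^(1/p) * r ^ (1-2/p) * ((2:ℝ)^(-(1-2/p)))^k := by
  have h2 : (0:ℝ) < 2 := two_pos
  set e := -(1/p) with he
  have hA : ∀ j : ℕ, r / 2^j = r * (2:ℝ)^(-(j:ℝ)) := by
    intro j
    rw [div_eq_mul_inv, ← Real.rpow_natCast 2 j, ← Real.rpow_neg h2.le]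
  have h2pos : ∀ x : ℝ, (0:ℝ) < (2:ℝ)^x := fun x => Real.rpow_pos_of_pos h2 x
  rw [hA k, hA (k+1)]
  rw [Real.mul_rpow (mul_pos hr (h2pos _)).le (mul_pos hr (h2pos _)).le,
    Real.mul_rpow hr.le (h2pos _).le, Real.mul_rpow hr.le (h2pos _).le,
    ← Real.rpow_mul h2.le, ← Real.rpow_mul h2.le,
    ← Real.rpow_natCast ((2:ℝ)^(-(1-2/p))) k, ← Real.rpow_mul h2.le]
  have hrr : r = r ^ (1:ℝ) := (Real.rpow_one r).symm
  calc r * (2:ℝ)^(-(k:ℝ)) * (r ^ e * (2:ℝ)^(-(k:ℝ) * e) * (r ^ e * (2:ℝ)^(-((k+1:ℕ):ℝ) * e)))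
      = (r ^ (1:ℝ) * r ^ e * r ^ e) * ((2:ℝ)^(-(k:ℝ)) * (2:ℝ)^(-(k:ℝ) * e) * (2:ℝ)^(-((k+1:ℕ):ℝ) * e)) := by
        rw [← hrr]; push_cast; ring
    _ = r ^ ((1:ℝ) + e + e) * (2:ℝ)^((-(k:ℝ)) + (-(k:ℝ) * e) + (-((k+1:ℕ):ℝ) * e)) := by
        rw [← Real.rpow_add hr, ← Real.rpow_add hr, ← Real.rpow_add h2, ← Real.rpow_add h2]
    _ = r ^ (1-2/p) * (2:ℝ)^(1/p + (-(1-2/p)) * (k:ℝ)) := by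
        congr 1
        · congr 1; rw [he]; ring
        · congr 1; rw [he]; push_cast; field_simp; ring
    _ = (2:ℝ)^(1/p) * r ^ (1-2/p) * (2:ℝ)^(-(1-2/p) * (k:ℝ)) := by
        rw [Real.rpow_add h2]; ring

noncomputable def cst (p : ℝ) : ℝ := (2:ℝ)^(1/p) * (1 - (2:ℝ)^(-(1-2/p)))⁻¹

lemma alpha_pos {p : ℝ} (hp : 2 < p) : 0 < 1 - 2/p := by
  have hp0 : (0:ℝ) < p := by linarith
  have : 2/p < 1 := (div_lt_one hp0).2 hp
  linarith

lemma c_lt_one {p : ℝ} (hp : 2 < p) : (2:ℝ)^(-(1-2/p)) < 1 :=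
  Real.rpow_lt_one_of_one_lt_of_neg one_lt_two (by linarith [alpha_pos hp])

lemma cst_nonneg {p : ℝ} (hp : 2 < p) : 0 ≤ cst p := by
  have h1 : (0:ℝ) < 1 - (2:ℝ)^(-(1-2/p)) := by linarith [c_lt_one hp]
  have h2 : (0:ℝ) < (2:ℝ)^(1/p) := Real.rpow_pos_of_pos two_pos _
  exact mul_nonneg h2.le (inv_nonneg.2 h1.le)

lemma vertex_avg {p : ℝ} (hp : 2 < p) {v : ℝ → ℝ} (hv : ContinuousOn v (Icc 0 1))
    {Λ : ℝ≥0∞} (hΛv : ∫⁻ z, ENNReal.ofReal (|Du v z| ^ p) ∂muS ≤ Λ) (hΛ : Λ ≠ ∞)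
    {t r : ℝ} (hr : 0 < r) {a b : ℕ → ℝ} (hlen : ∀ k, b k - a k = r / 2^k)
    (ha0 : ∀ k, 0 ≤ a k) (hb1 : ∀ k, b k ≤ 1)
    (hnest : ∀ k, Ioo (a (k+1)) (b (k+1)) ⊆ Ioo (a k) (b k))
    (ht : t ∈ Icc (0:ℝ) 1)
    (hdist : ∀ k, ∀ z ∈ Ioo (a k) (b k), |z - t| ≤ r / 2^k) :
    |v t - avgI v (a 0) (b 0)| ≤ cst p * (Λ ^ (1/p)).toReal * r ^ (1-2/p) := by
  have hp0 : (0:ℝ) < p := by linarith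
  have hα := alpha_pos hp
  set M := (Λ ^ (1/p)).toReal with hM
  have hM0 : 0 ≤ M := ENNReal.toReal_nonneg
  set c := (2:ℝ)^(-(1-2/p)) with hc
  have hc0 : 0 < c := Real.rpow_pos_of_pos two_pos _
  have hc1 : c < 1 := Real.rpow_lt_one_of_one_lt_of_neg one_lt_two (by linarith)
  have h1c : (0:ℝ) < 1 - c := by linarith
  have hab : ∀ k, a k < b k := by
    intro k
    have := hlen k
    have h2k : (0:ℝ) < 2^k := by positivity
    nlinarith [div_pos hr h2k]
  -- step bound
  have stepk : ∀ k, |avgI v (a k) (b k) - avgI v (a (k+1)) (b (k+1))| ≤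
      (2:ℝ)^(1/p) * r ^ (1-2/p) * c^k * M := by
    intro k
    have hDk : ∀ z ∈ Ioo (a k) (b k), ∀ w ∈ Ioo (a (k+1)) (b (k+1)), |w - z| ≤ r / 2^k := by
      intro z hz w hw
      have hw' := hnest k hw
      rw [abs_sub_le_iff]
      have hL := hlen k
      exact ⟨by linarith [hz.1, hz.2, hw'.1, hw'.2], by linarith [hz.1, hz.2, hw'.1, hw'.2]⟩
    have h2k : (0:ℝ) < 2^k := by positivity
    have hbound := avg_sub_avg hp hv hΛv hΛ (ha0 k) (hab k) (hb1 k)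
      (ha0 (k+1)) (hab (k+1)) (hb1 (k+1)) (div_pos hr h2k).le hDk
    rw [hlen k, hlen (k+1)] at hbound
    refine hbound.trans (le_of_eq ?_)
    have := rpow_arith hp0 hr k (p := p)
    calc r / 2^k * M * (r/2^k * (r/2^(k+1)))^(-(1/p))
        = ((r/2^k) * ((r/2^k) * (r/2^(k+1)))^(-(1/p))) * M := by ring
      _ = ((2:ℝ)^(1/p) * r ^ (1-2/p) * c^k) * M := by rw [this]
  -- geometric sum
  have hsum : ∀ n : ℕ, ∑ k ∈ Finset.range n, c^k ≤ (1-c)⁻¹ := by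
    intro n
    rw [geom_sum_eq hc1.ne]
    have heq : (c^n - 1)/(c - 1) = (1 - c^n)/(1-c) := by
      rw [← neg_div_neg_eq]; ring_nf
    rw [heq, ← one_div]
    refine div_le_div₀ zero_le_one ?_ h1c le_rfl
    have : 0 ≤ c^n := le_of_lt (pow_pos hc0 n)
    linarith
  have tele : ∀ n : ℕ, |avgI v (a 0) (b 0) - avgI v (a n) (b n)| ≤
      (2:ℝ)^(1/p) * r ^ (1-2/p) * M * (1-c)⁻¹ := by
    intro n
    have h1 := dist_le_range_sum_dist (fun k => avgI v (a k) (b k)) n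
    rw [Real.dist_eq] at h1
    refine h1.trans ?_
    have h2 : ∀ k ∈ Finset.range n, dist (avgI v (a k) (b k)) (avgI v (a (k+1)) (b (k+1)))
        ≤ (2:ℝ)^(1/p) * r ^ (1-2/p) * M * c^k := by
      intro k _
      rw [Real.dist_eq]
      refine (stepk k).trans (le_of_eq (by ring))
    refine (Finset.sum_le_sum h2).trans ?_
    rw [← Finset.mul_sum]
    refine mul_le_mul_of_nonneg_left (hsum n) ?_
    have h2p : (0:ℝ) < (2:ℝ)^(1/p) := Real.rpow_pos_of_pos two_pos _
    have hrα : (0:ℝ) < r ^ (1-2/p) := Real.rpow_pos_of_pos hr _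
    positivity
  -- tail
  have key : ∀ δ : ℝ, 0 < δ →
      |v t - avgI v (a 0) (b 0)| ≤ cst p * M * r ^ (1-2/p) + δ := by
    intro δ hδ
    obtain ⟨ε, hε, hεp⟩ := Metric.continuousWithinAt_iff.1 (hv t ht) δ hδ
    obtain ⟨n, hn⟩ := pow_unbounded_of_one_lt (r / ε) one_lt_two
    have h2n : (0:ℝ) < 2^n := by positivity
    have hrn : r / 2^n < ε := by
      rw [div_lt_iff₀ h2n]
      rw [div_lt_iff₀ hε] at hn
      exact hn.trans_eq (mul_comm _ _)
    have htail : |avgI v (a n) (b n) - v t| ≤ δ := by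
      have hsub : Ioo (a n) (b n) ⊆ Icc (0:ℝ) 1 := fun z hz =>
        ⟨le_trans (ha0 n) hz.1.le, le_trans hz.2.le (hb1 n)⟩
      have hint : IntegrableOn v (Ioo (a n) (b n)) :=
        ((hv.mono (Set.Icc_subset_Icc (ha0 n) (hb1 n))).integrableOn_Icc).mono_set
          Set.Ioo_subset_Icc_self
      have hfin : volume (Ioo (a n) (b n)) < ⊤ := by
        rw [Real.volume_Ioo]; exact ENNReal.ofReal_lt_top
      have hlenpos : 0 < b n - a n := sub_pos.2 (hab n)
      have havg : avgI v (a n) (b n) - v t =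
          (∫ z in Set.Ioo (a n) (b n), (v z - v t)) / (b n - a n) := by
        rw [integral_sub hint (integrableOn_const (C := v t) hfin.ne), setIntegral_const,
          Real.volume_real_Ioo_of_le (hab n).le, smul_eq_mul]
        unfold avgI
        field_simp
      have hbd : ‖∫ z in Set.Ioo (a n) (b n), (v z - v t)‖ ≤ δ * (b n - a n) := by
        have := norm_setIntegral_le_of_norm_le_const (μ := volume) (C := δ)
          (s := Ioo (a n) (b n)) (f := fun z => v z - v t) hfin ?_
        · rw [Real.volume_real_Ioo_of_le (hab n).le] at this
          exact this
        · intro z hz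
          have hzI : z ∈ Icc (0:ℝ) 1 := hsub hz
          have hdz : dist z t < ε := lt_of_le_of_lt (by
            rw [Real.dist_eq]; exact hdist n z hz) hrn
          exact le_of_lt (by simpa [Real.dist_eq] using hεp hzI hdz)
      rw [havg, abs_div, abs_of_pos hlenpos, div_le_iff₀ hlenpos]
      calc |∫ z in Set.Ioo (a n) (b n), (v z - v t)| ≤ δ * (b n - a n) := hbd
        _ = δ * (b n - a n) := rfl
    have h3 := abs_sub_le (v t) (avgI v (a n) (b n)) (avgI v (a 0) (b 0))
    have e1 : |v t - avgI v (a n) (b n)| ≤ δ := by rw [abs_sub_comm]; exact htail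
    have e2 : |avgI v (a n) (b n) - avgI v (a 0) (b 0)| ≤
        (2:ℝ)^(1/p) * r ^ (1-2/p) * M * (1-c)⁻¹ := by
      rw [abs_sub_comm]; exact tele n
    have h4 : |v t - avgI v (a 0) (b 0)| ≤
        δ + (2:ℝ)^(1/p) * r ^ (1-2/p) * M * (1-c)⁻¹ := by linarith
    refine h4.trans (le_of_eq ?_)
    rw [cst]; ring
  have := le_of_forall_pos_le_add key
  linarith [this]

lemma holder {p : ℝ} (hp : 2 < p) {v : ℝ → ℝ} (hv : ContinuousOn v (Icc 0 1))
    {Λ : ℝ≥0∞} (hΛv : ∫⁻ z, ENNReal.ofReal (|Du v z| ^ p) ∂muS ≤ Λ) (hΛ : Λ ≠ ∞)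
    {x y : ℝ} (hx : x ∈ Icc (0:ℝ) 1) (hy : y ∈ Icc (0:ℝ) 1) (hxy : x ≤ y) :
    |v y - v x| ≤ 2 * cst p * (Λ ^ (1/p)).toReal * (y - x) ^ (1-2/p) := by
  have hα := alpha_pos hp
  rcases eq_or_lt_of_le hxy with heq | hlt
  · subst heq
    simp [Real.zero_rpow (ne_of_gt hα)]
  set M := (Λ ^ (1/p)).toReal with hM
  have hM0 : (0:ℝ) ≤ M := ENNReal.toReal_nonneg
  set r := y - x with hr'
  have hr : 0 < r := sub_pos.2 hlt
  have h2k : ∀ k : ℕ, (0:ℝ) < 2^k := fun k => by positivity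
  have h2k1 : ∀ k : ℕ, (1:ℝ) ≤ 2^k := fun k => one_le_pow₀ one_le_two
  have hdivk : ∀ k : ℕ, r / 2^k ≤ r := fun k => div_le_self hr.le (h2k1 k)
  have hdivmono : ∀ k : ℕ, r / 2^(k+1) ≤ r / 2^k := by
    intro k
    gcongr
    · exact one_le_two
    · exact Nat.le_succ k
  -- right family at x
  have hR : |v x - avgI v x (x + r)| ≤ cst p * M * r ^ (1-2/p) := by
    have := vertex_avg hp hv hΛv hΛ hr (a := fun _ => x) (b := fun k => x + r/2^k)
      (fun k => by ring) (fun k => hx.1) (fun k => by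
        have := hdivk k
        have hy1 := hy.2
        rw [hr'] at this ⊢
        linarith)
      (fun k z hz => ⟨hz.1, lt_of_lt_of_le hz.2 (by linarith [hdivmono k])⟩)
      hx
      (fun k z hz => by
        rw [abs_of_pos (sub_pos.2 hz.1)]
        linarith [hz.2])
    simp only [pow_zero, div_one] at this
    rw [← hM] at this
    exact this
  -- left family at y
  have hL : |v y - avgI v x y| ≤ cst p * M * r ^ (1-2/p) := by
    have := vertex_avg hp hv hΛv hΛ hr (a := fun k => y - r/2^k) (b := fun _ => y)
      (fun k => by ring) (fun k => by
        have := hdivk k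
        have hx0 := hx.1
        rw [hr'] at this ⊢
        linarith)
      (fun k => hy.2)
      (fun k z hz => ⟨lt_of_le_of_lt (by linarith [hdivmono k]) hz.1, hz.2⟩)
      hy
      (fun k z hz => by
        rw [abs_of_neg (sub_neg.2 hz.2)]
        linarith [hz.1])
    simp only [pow_zero, div_one] at this
    have hy0 : y - r = x := by rw [hr']; ring
    rw [hy0, ← hM] at this
    exact this
  have hx0 : x + r = y := by rw [hr']; ring
  rw [hx0] at hR
  have h3 := abs_sub_le (v y) (avgI v x y) (v x)
  have e1 : |avgI v x y - v x| = |v x - avgI v x y| := abs_sub_comm _ _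
  calc |v y - v x| ≤ |v y - avgI v x y| + |avgI v x y - v x| := h3
    _ ≤ cst p * M * r ^ (1-2/p) + cst p * M * r ^ (1-2/p) := by
        rw [e1]; exact add_le_add hL hR
    _ = 2 * cst p * M * (y - x) ^ (1-2/p) := by rw [hr']; ring

lemma sup_bound {p : ℝ} (hp : 2 < p) {v : ℝ → ℝ} (hv : ContinuousOn v (Icc 0 1))
    {Λ : ℝ≥0∞} (hΛv : ∫⁻ z, ENNReal.ofReal (|Du v z| ^ p) ∂muS ≤ Λ) (hΛ : Λ ≠ ∞)
    (hv0 : v 0 = 0) {x : ℝ} (hx : x ∈ Icc (0:ℝ) 1) :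
    |v x| ≤ 2 * cst p * (Λ ^ (1/p)).toReal := by
  have hα := alpha_pos hp
  have hM0 : (0:ℝ) ≤ (Λ ^ (1/p)).toReal := ENNReal.toReal_nonneg
  have h := holder hp hv hΛv hΛ (Set.left_mem_Icc.2 zero_le_one) hx hx.1
  rw [hv0, sub_zero, sub_zero] at h
  refine h.trans ?_
  have hx1 : x ^ (1-2/p) ≤ 1 := Real.rpow_le_one hx.1 hx.2 hα.le
  nlinarith [cst_nonneg hp, mul_nonneg (mul_nonneg (by norm_num : (0:ℝ) ≤ 2) (cst_nonneg hp)) hM0]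

lemma meas_abs_rpow (p : ℝ) : Measurable (fun t : ℝ => |t| ^ p) := by measurability


/-- Existence of minimizers for nonlocal variational problems with `p > 2`, a coercive
Carathéodory integrand (no convexity assumed), and zero endpoint conditions imposed via
the continuous representative.  The energy is encoded as a lower integral of the
(nonnegative) integrand shifted by the coercivity constant `C₀`. -/
theorem stmt8 (p : ℝ) (hp : 2 < p)
    (W : ℝ → ℝ → ℝ → ℝ)
    (hWx : ∀ a b : ℝ, Measurable fun x => W x a b)
    (hWc : ∀ x : ℝ, Continuous fun q : ℝ × ℝ => W x q.1 q.2)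
    (C₀ : ℝ) (hC₀ : 0 < C₀)
    (hcoer : ∀ x a b : ℝ, C₀ * (|b| ^ p - 1) ≤ W x a b)
    (A : Set (ℝ → ℝ))
    (hA : A = {u : ℝ → ℝ | MemLp u (ENNReal.ofReal p) muI ∧
        MemLp (Du u) (ENNReal.ofReal p) muS ∧
        ∃ v : ℝ → ℝ, ContinuousOn v (Set.Icc 0 1) ∧ (∀ᵐ x ∂muI, v x = u x) ∧
          v 0 = 0 ∧ v 1 = 0})
    (E : (ℝ → ℝ) → ℝ≥0∞)
    (hE : E = fun u => ∫⁻ z : ℝ × ℝ, ENNReal.ofReal (W z.1 (u z.1) (Du u z) + C₀) ∂muS)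
    (hnontriv : ∃ u₀ ∈ A, E u₀ < ∞) :
    ∃ u ∈ A, ∀ v ∈ A, E u ≤ E v := by
  classical
  have hp0 : (0:ℝ) < p := by linarith
  have hα := alpha_pos hp
  obtain ⟨u₀, hu₀A, hu₀E⟩ := hnontriv
  set m : ℝ≥0∞ := ⨅ u ∈ A, E u with hm
  have hmfin : m ≠ ∞ := by
    refine ne_top_of_le_ne_top hu₀E.ne ?_
    exact iInf₂_le u₀ hu₀A
  -- minimizing sequence
  have hseq : ∀ n : ℕ, ∃ u, u ∈ A ∧ E u < m + ((n:ℝ≥0∞)+1)⁻¹ := by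
    intro n
    by_contra hcon
    push_neg at hcon
    have hle : m + ((n:ℝ≥0∞)+1)⁻¹ ≤ m := by
      rw [hm]
      exact le_iInf₂ fun u hu => hcon u hu
    have : m < m + ((n:ℝ≥0∞)+1)⁻¹ :=
      ENNReal.lt_add_right hmfin (by simp)
    exact absurd (lt_of_lt_of_le this hle) (lt_irrefl _)
  choose u huA huE using hseq
  have humem : ∀ n, MemLp (u n) (ENNReal.ofReal p) muI ∧
      MemLp (Du (u n)) (ENNReal.ofReal p) muS ∧
      ∃ v : ℝ → ℝ, ContinuousOn v (Set.Icc 0 1) ∧ (∀ᵐ x ∂muI, v x = u n x) ∧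
        v 0 = 0 ∧ v 1 = 0 := fun n => by
    have := huA n; rw [hA] at this; exact this
  choose vv hvcont hvae hv0 hv1 using fun n => (humem n).2.2
  have huaem : ∀ n, AEMeasurable (u n) muI := fun n =>
    (humem n).1.aestronglyMeasurable.aemeasurable
  -- uniform energy bound
  have hEle : ∀ n, E (u n) ≤ m + 1 := by
    intro n
    refine (huE n).le.trans (add_le_add_right ?_ m)
    simp [ENNReal.inv_le_one]
  set K : ℝ≥0∞ := (m + 1) / ENNReal.ofReal C₀ with hK
  have hC₀0 : ENNReal.ofReal C₀ ≠ 0 := by simp [hC₀, hC₀.le]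
  have hKfin : K ≠ ∞ := by
    rw [hK]
    exact (ENNReal.div_lt_top (by simp [hmfin]) hC₀0).ne
  have hkey : ∀ n, ∫⁻ z, ENNReal.ofReal (|Du (u n) z| ^ p) ∂muS ≤ K := by
    intro n
    rw [hK, ENNReal.le_div_iff_mul_le (Or.inl hC₀0) (Or.inl ENNReal.ofReal_ne_top)]
    rw [mul_comm]
    calc ENNReal.ofReal C₀ * ∫⁻ z, ENNReal.ofReal (|Du (u n) z| ^ p) ∂muS
        = ∫⁻ z, ENNReal.ofReal C₀ * ENNReal.ofReal (|Du (u n) z| ^ p) ∂muS :=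
          (lintegral_const_mul' _ _ ENNReal.ofReal_ne_top).symm
      _ ≤ E (u n) := by
          rw [hE]
          refine lintegral_mono fun z => ?_
          rw [← ENNReal.ofReal_mul hC₀.le]
          refine ENNReal.ofReal_le_ofReal ?_
          have h := hcoer z.1 (u n z.1) (Du (u n) z)
          rw [mul_sub, mul_one] at h
          linarith
      _ ≤ m + 1 := hEle n
  -- transfer to continuous representatives
  have hDuae : ∀ n, Du (vv n) =ᵐ[muS] Du (u n) := by
    intro n
    filter_upwards [ae_fst (hvae n), ae_snd (hvae n)] with z h1 h2
    simp only [Du, h1, h2]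
  have hΛv : ∀ n, ∫⁻ z, ENNReal.ofReal (|Du (vv n) z| ^ p) ∂muS ≤ K := by
    intro n
    refine le_trans (le_of_eq (lintegral_congr_ae ?_)) (hkey n)
    filter_upwards [hDuae n] with z hz
    rw [hz]
  set M : ℝ := (K ^ (1/p)).toReal with hMdef
  have hM0 : 0 ≤ M := ENNReal.toReal_nonneg
  set B : ℝ := 2 * cst p * M with hB
  have hB0 : 0 ≤ B := by
    rw [hB]
    have := cst_nonneg hp
    positivity
  -- Arzelà–Ascoli
  set F : ℕ → BoundedContinuousFunction (Icc (0:ℝ) 1) ℝ := fun n =>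
    BoundedContinuousFunction.ofNormedAddCommGroup ((Icc (0:ℝ) 1).restrict (vv n))
      ((hvcont n).restrict) B (fun t => by
        rw [Real.norm_eq_abs, hB]
        exact sup_bound hp (hvcont n) (hΛv n) hKfin (hv0 n) t.2) with hF
  have hFval : ∀ n (t : Icc (0:ℝ) 1), F n t = vv n t.1 := fun n t => rfl
  have hequi : Equicontinuous (fun i : ↥(Set.range F) => ⇑(i : BoundedContinuousFunction (Icc (0:ℝ) 1) ℝ)) := by
    refine Metric.equicontinuous_of_continuity_modulus (fun t => 2 * cst p * M * |t| ^ (1-2/p)) ?_ _ ?_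
    · have hc : ContinuousAt (fun t : ℝ => |t| ^ (1-2/p)) 0 :=
        ContinuousAt.rpow_const continuous_abs.continuousAt (Or.inr hα.le)
      have h1 : Tendsto (fun t : ℝ => |t| ^ (1-2/p)) (𝓝 0) (𝓝 (|(0:ℝ)| ^ (1-2/p))) :=
        hc.tendsto
      rw [abs_zero, Real.zero_rpow hα.ne'] at h1
      simpa using h1.const_mul (2 * cst p * M)
    · rintro x y ⟨f, n, rfl⟩
      show dist (vv n x.1) (vv n y.1) ≤ 2 * cst p * M * |dist x y| ^ (1-2/p)
      have habs : |dist x y| = |x.1 - y.1| := by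
        rw [abs_of_nonneg dist_nonneg, Subtype.dist_eq, Real.dist_eq]
      rw [habs, Real.dist_eq]
      rcases le_total y.1 x.1 with hle | hle
      · rw [abs_of_nonneg (sub_nonneg.2 hle)]
        exact holder hp (hvcont n) (hΛv n) hKfin y.2 x.2 hle
      · rw [abs_sub_comm (vv n x.1), abs_sub_comm x.1, abs_of_nonneg (sub_nonneg.2 hle)]
        exact holder hp (hvcont n) (hΛv n) hKfin x.2 y.2 hle
  have hcomp : IsCompact (closure (Set.range F)) := by
    refine BoundedContinuousFunction.arzela_ascoli (Icc (-B) B) isCompact_Icc _ ?_ hequi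
    rintro f t ⟨n, rfl⟩
    rw [hFval]
    have := sup_bound hp (hvcont n) (hΛv n) hKfin (hv0 n) t.2
    rw [abs_le] at this
    exact ⟨by linarith [this.1], by linarith [this.2]⟩
  obtain ⟨g, hgmem, φ, hφ, hconv⟩ :=
    hcomp.tendsto_subseq (fun n => subset_closure (Set.mem_range_self n))
  -- the limit function
  set w : ℝ → ℝ := fun x => g (Set.projIcc 0 1 zero_le_one x) with hw
  have hwc : Continuous w := g.continuous.comp continuous_projIcc
  have hpt : ∀ t : Icc (0:ℝ) 1, Tendsto (fun n => vv (φ n) t.1) atTop (𝓝 (g t)) := by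
    intro t
    have := (continuous_eval_const (F := BoundedContinuousFunction (Icc (0:ℝ) 1) ℝ) t).continuousAt.tendsto.comp hconv
    exact this
  have hwval : ∀ x (hx : x ∈ Icc (0:ℝ) 1), w x = g ⟨x, hx⟩ := by
    intro x hx
    exact congrArg g (Set.projIcc_of_mem zero_le_one hx)
  have hw0 : w 0 = 0 := by
    have h0m : (0:ℝ) ∈ Icc (0:ℝ) 1 := Set.left_mem_Icc.2 zero_le_one
    rw [hwval 0 h0m]
    have h : Tendsto (fun _ : ℕ => (0:ℝ)) atTop (𝓝 (g ⟨0, h0m⟩)) := by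
      simpa [hv0] using hpt ⟨0, h0m⟩
    exact tendsto_nhds_unique h tendsto_const_nhds
  have hw1 : w 1 = 0 := by
    have h1m : (1:ℝ) ∈ Icc (0:ℝ) 1 := Set.right_mem_Icc.2 zero_le_one
    rw [hwval 1 h1m]
    have h : Tendsto (fun _ : ℕ => (0:ℝ)) atTop (𝓝 (g ⟨1, h1m⟩)) := by
      simpa [hv1] using hpt ⟨1, h1m⟩
    exact tendsto_nhds_unique h tendsto_const_nhds
  -- a.e. convergence on (0,1)
  have hptae : ∀ᵐ x ∂muI, Tendsto (fun n => u (φ n) x) atTop (𝓝 (w x)) := by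
    have hall : ∀ᵐ x ∂muI, ∀ n : ℕ, vv n x = u n x := ae_all_iff.2 fun n => hvae n
    filter_upwards [hall, ae_mem_I] with x hx hxI
    have hxIcc : x ∈ Icc (0:ℝ) 1 := Set.Ioo_subset_Icc_self hxI
    have := hpt ⟨x, hxIcc⟩
    rw [← hwval x hxIcc] at this
    simpa [fun n => (hx (φ n)).symm] using this
  have hSconv : ∀ᵐ z : ℝ × ℝ ∂muS,
      Tendsto (fun n => u (φ n) z.1) atTop (𝓝 (w z.1)) ∧
      Tendsto (fun n => Du (u (φ n)) z) atTop (𝓝 (Du w z)) := by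
    filter_upwards [ae_fst hptae, ae_snd hptae] with z h1 h2
    refine ⟨h1, ?_⟩
    simp only [Du]
    exact (h2.sub h1).div_const _
  -- Fatou for the energy
  set f : ℕ → ℝ × ℝ → ℝ≥0∞ := fun n z =>
    ENNReal.ofReal (W z.1 (u (φ n) z.1) (Du (u (φ n)) z) + C₀) with hf
  have hfm : ∀ n, AEMeasurable (f n) muS := fun n =>
    aem_integrand hWx hWc C₀ (huaem (φ n))
  have hflim : ∀ᵐ z ∂muS, Tendsto (fun n => f n z) atTop
      (𝓝 (ENNReal.ofReal (W z.1 (w z.1) (Du w z) + C₀))) := by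
    filter_upwards [hSconv] with z hz
    have hWt : Tendsto (fun n => W z.1 (u (φ n) z.1) (Du (u (φ n)) z)) atTop
        (𝓝 (W z.1 (w z.1) (Du w z))) := by
      have := ((hWc z.1).tendsto (w z.1, Du w z)).comp (hz.1.prodMk_nhds hz.2)
      exact this
    exact (ENNReal.continuous_ofReal.tendsto _).comp (hWt.add_const C₀)
  have hEw_le : E w ≤ m := by
    have h1 : E w = ∫⁻ z, liminf (fun n => f n z) atTop ∂muS := by
      rw [hE]
      refine lintegral_congr_ae ?_
      filter_upwards [hflim] with z hz
      exact hz.liminf_eq.symm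
    rw [h1]
    refine (lintegral_liminf_le' hfm).trans ?_
    -- liminf of energies ≤ m
    refine ENNReal.le_of_forall_pos_le_add fun ε hε hmtop => ?_
    obtain ⟨N, hN⟩ := ENNReal.exists_inv_nat_lt (by simpa using hε.ne' : (ε:ℝ≥0∞) ≠ 0)
    have hev : ∀ᶠ n in atTop, (∫⁻ z, f n z ∂muS) ≤ m + ε := by
      filter_upwards [Filter.eventually_ge_atTop N] with n hn
      have h2 : (∫⁻ z, f n z ∂muS) = E (u (φ n)) := by rw [hE, hf]
      rw [h2]
      refine (huE (φ n)).le.trans ?_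
      refine add_le_add_right ?_ m
      have hφn : (N:ℝ≥0∞) ≤ (φ n : ℕ) := by
        exact_mod_cast le_trans hn (hφ.le_apply)
      refine le_trans ?_ hN.le
      rw [ENNReal.inv_le_inv]
      exact le_trans hφn le_self_add
    calc liminf (fun n => ∫⁻ z, f n z ∂muS) atTop ≤
        liminf (fun _ => m + ε) atTop := Filter.liminf_le_liminf hev
      _ = m + ε := Filter.liminf_const _
  -- membership of w in A
  have hwA : w ∈ A := by
    rw [hA]
    refine ⟨?_, ?_, w, hwc.continuousOn, Filter.Eventually.of_forall fun x => rfl, hw0, hw1⟩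
    · refine MemLp.of_bound hwc.aestronglyMeasurable ‖g‖ ?_
      refine Filter.Eventually.of_forall fun x => ?_
      rw [hw]
      exact g.norm_coe_le_norm _
    · refine ⟨?_, ?_⟩
      · refine Measurable.aestronglyMeasurable ?_
        have : Measurable fun z : ℝ × ℝ => (w z.2 - w z.1) / (z.2 - z.1) := by
          refine Measurable.div ?_ ?_
          · exact ((hwc.comp continuous_snd).sub (hwc.comp continuous_fst)).measurable
          · exact (continuous_snd.sub continuous_fst).measurable
        exact this
      · have hpne0 : ENNReal.ofReal p ≠ 0 := by
          simp [ENNReal.ofReal_eq_zero]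
          linarith
        rw [eLpNorm_lt_top_iff_lintegral_rpow_enorm_lt_top hpne0 ENNReal.ofReal_ne_top]
        rw [ENNReal.toReal_ofReal hp0.le]
        have heq : ∀ z : ℝ × ℝ, ‖Du w z‖ₑ ^ p =
            ENNReal.ofReal (|Du w z| ^ p) := by
          intro z
          rw [Real.enorm_eq_ofReal_abs, ENNReal.ofReal_rpow_of_nonneg (abs_nonneg _) hp0.le]
        simp only [heq]
        have hfatou : ∫⁻ z, ENNReal.ofReal (|Du w z| ^ p) ∂muS ≤ K := by
          have h1 : ∫⁻ z, ENNReal.ofReal (|Du w z| ^ p) ∂muS =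
              ∫⁻ z, liminf (fun n => ENNReal.ofReal (|Du (u (φ n)) z| ^ p)) atTop ∂muS := by
            refine lintegral_congr_ae ?_
            filter_upwards [hSconv] with z hz
            refine (Filter.Tendsto.liminf_eq ?_).symm
            have h2 : Tendsto (fun t : ℝ => |t| ^ p) (𝓝 (Du w z)) (𝓝 (|Du w z| ^ p)) :=
              (ContinuousAt.rpow_const continuous_abs.continuousAt (Or.inr hp0.le)).tendsto
            exact ((ENNReal.continuous_ofReal.tendsto _).comp h2).comp hz.2
          rw [h1]
          refine (lintegral_liminf_le' ?_).trans ?_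
          · intro n
            exact (ENNReal.measurable_ofReal.comp (meas_abs_rpow p)).comp_aemeasurable
              (aem_Du (huaem (φ n)))
          · calc liminf (fun n => ∫⁻ z, ENNReal.ofReal (|Du (u (φ n)) z| ^ p) ∂muS) atTop
                ≤ liminf (fun _ => K) atTop :=
                  Filter.liminf_le_liminf (Filter.Eventually.of_forall fun n => hkey (φ n))
              _ = K := Filter.liminf_const _
        exact lt_of_le_of_lt hfatou hKfin.lt_top
  exact ⟨w, hwA, fun v' hv' => hEw_le.trans (iInf₂_le v' hv')⟩
end
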